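/- arXiv:2412.16415 — 5 statements merged into one kernel-verified Lean document; each statement's English description precedes it below -/
import Mathlib

section
/- Let d ≥ 1, p ∈ (0,1] and k ≥ 1. For every pair of distinct points x, y ∈ Δ_k := [−2^{k−1}, 2^{k−1})^d ∩ ℤ^d, the discrete fractal percolation satisfies P(x ∈ Q_d(p;k) and y ∈ Q_d(p;k)) ≤ p^{k + log₂|x−y| − (1/2)·log₂ d}, i.e. P(x, y ∈ Q_d(p;k)) ≤ p^k · (|x−y|/√d)^{log₂ p}. -/
open MeasureTheory ProbabilityTheory Set Pointwise
open scoped ENNReal Classical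

noncomputable section

/-- The lattice `ℤ^d`. -/
abbrev Zd (d : ℕ) := Fin d → ℤ

/-- Euclidean distance on `ℤ^d`. -/
def zdist {d : ℕ} (x y : Zd d) : ℝ := Real.sqrt (∑ i, ((x i - y i : ℤ) : ℝ) ^ 2)

/-- Euclidean norm on `ℤ^d`. -/
def znorm {d : ℕ} (x : Zd d) : ℝ := Real.sqrt (∑ i, ((x i : ℤ) : ℝ) ^ 2)

/-- Euclidean diameter of a subset of `ℤ^d`. -/
def zdiam {d : ℕ} (A : Set (Zd d)) : ℝ := sSup {r : ℝ | ∃ x ∈ A, ∃ y ∈ A, r = zdist x y}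

/-- The set of energies `Σ_{x,y∈A} μ(x)μ(y)(|x-y| ∨ 1)^(-β)` of probability measures `μ`
supported on `A`. -/
def discEnergies {d : ℕ} (β : ℝ) (A : Set (Zd d)) : Set ℝ :=
  { E | ∃ μ : Zd d → ℝ, (∀ x, 0 ≤ μ x) ∧ (∀ x, x ∉ A → μ x = 0) ∧ HasSum μ 1 ∧
        E = ∑' x, ∑' y, μ x * μ y * (max (zdist x y) 1) ^ (-β) }

/-- Discrete Newtonian capacity with parameter `β` (it equals `0` for `A = ∅`,
since `sInf ∅ = 0` and `0⁻¹ = 0` in `ℝ`). -/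
def discCap {d : ℕ} (β : ℝ) (A : Set (Zd d)) : ℝ := (sInf (discEnergies β A))⁻¹

/-- The box `Δ_k = [-2^(k-1), 2^(k-1))^d ∩ ℤ^d`. -/
def box (d k : ℕ) : Set (Zd d) := {x | ∀ i, -(2:ℤ)^(k-1) ≤ x i ∧ x i < (2:ℤ)^(k-1)}

/-- Edges of the complete `2^d`-ary tree of height `k`: the edge `(j, v)` joins the vertex
at depth `j+1` whose coordinatewise binary code is `v` to its parent. -/
abbrev TreeEdge (d k : ℕ) := Fin k × Zd d

/-- The coordinatewise binary code of the depth-`j` ancestor (in the `2^d`-ary tree of height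
`k`) of the leaf corresponding to the lattice point `x ∈ Δ_k`; the code of a depth-`j`
vertex consists of the `j` most significant base-2 digits of each coordinate of `x + 2^(k-1)`. -/
def ancestorCode (d k j : ℕ) (x : Zd d) : Zd d := fun i => (x i + 2 ^ (k - 1)) / 2 ^ (k - j)

/-- The discrete fractal percolation set `Q_d(p;k)` determined by a configuration `ω` of
open/closed edges of the `2^d`-ary tree of height `k`: the points of `Δ_k` whose
root-to-leaf path consists of open edges only. -/
def percCluster (d k : ℕ) (ω : TreeEdge d k → Bool) : Set (Zd d) :=
  {x | x ∈ box d k ∧ ∀ j : Fin k, ω (j, ancestorCode d k ((j : ℕ) + 1) x) = true}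

/-- Ancestor code as a natural-number division. -/
lemma anc_as_nat {d k : ℕ} (j : ℕ) (x : Zd d) (i : Fin d) (h0 : 0 ≤ x i + 2 ^ (k - 1)) :
    ancestorCode d k j x i = (((x i + 2 ^ (k - 1)).toNat / 2 ^ (k - j) : ℕ) : ℤ) := by
  unfold ancestorCode
  conv_lhs => rw [← Int.toNat_of_nonneg h0]
  rw [Int.natCast_ediv]
  push_cast
  ring_nf

/-- Equality of ancestor codes descends to smaller depths. -/
lemma code_descend {d k : ℕ} (x y : Zd d) (hx : x ∈ box d k) (hy : y ∈ box d k)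
    (a b : ℕ) (hab : a ≤ b) (hbk : b ≤ k)
    (h : ancestorCode d k b x = ancestorCode d k b y) :
    ancestorCode d k a x = ancestorCode d k a y := by
  funext i
  have h0x : (0:ℤ) ≤ x i + 2 ^ (k - 1) := by
    have := (hx i).1; linarith
  have h0y : (0:ℤ) ≤ y i + 2 ^ (k - 1) := by
    have := (hy i).1; linarith
  have hb := congrFun h i
  rw [anc_as_nat b x i h0x, anc_as_nat b y i h0y] at hb
  have hbn : (x i + 2 ^ (k - 1)).toNat / 2 ^ (k - b) =
      (y i + 2 ^ (k - 1)).toNat / 2 ^ (k - b) := by exact_mod_cast hb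
  rw [anc_as_nat a x i h0x, anc_as_nat a y i h0y]
  congr 1
  have hk' : k - a = (k - b) + (b - a) := by omega
  rw [hk', pow_add, ← Nat.div_div_eq_div_mul, ← Nat.div_div_eq_div_mul, hbn]

/-- Depth-0 ancestor codes of box points vanish. -/
lemma code_zero {d k : ℕ} (hk : 1 ≤ k) (x : Zd d) (hx : x ∈ box d k) :
    ancestorCode d k 0 x = fun _ => 0 := by
  funext i
  have h1 := (hx i).1
  have h2 := (hx i).2
  have hpow : (2:ℤ) ^ k = 2 ^ (k - 1) + 2 ^ (k - 1) := by
    have h : (2:ℤ) ^ ((k - 1) + 1) = 2 ^ (k - 1) * 2 := pow_succ 2 (k - 1)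
    have hkk : (k - 1) + 1 = k := by omega
    rw [hkk] at h
    linarith
  unfold ancestorCode
  rw [Nat.sub_zero]
  exact Int.ediv_eq_zero_of_lt (by linarith) (by linarith [hpow])

/-- Two points whose ancestor codes agree at depth `m` are within `2^(k-m)` in each
coordinate. -/
lemma coord_bound {d k m : ℕ} (x y : Zd d) (hx : x ∈ box d k) (hy : y ∈ box d k)
    (h : ancestorCode d k m x = ancestorCode d k m y) (i : Fin d) :
    |x i - y i| ≤ 2 ^ (k - m) := by
  set n : ℤ := 2 ^ (k - m) with hn
  have hnpos : (0:ℤ) < n := by positivity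
  set a : ℤ := x i + 2 ^ (k - 1) with ha
  set b : ℤ := y i + 2 ^ (k - 1) with hb
  have hdiv : a / n = b / n := congrFun h i
  have hma := Int.emod_add_mul_ediv a n
  have hmb := Int.emod_add_mul_ediv b n
  have h1 : 0 ≤ a % n := Int.emod_nonneg a (ne_of_gt hnpos)
  have h2 : a % n < n := Int.emod_lt_of_pos a hnpos
  have h3 : 0 ≤ b % n := Int.emod_nonneg b (ne_of_gt hnpos)
  have h4 : b % n < n := Int.emod_lt_of_pos b hnpos
  have hdiff : x i - y i = a % n - b % n := by
    have : a - b = a % n - b % n := by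
      conv_lhs => rw [← hma, ← hmb, hdiv]
      ring
    have hab : a - b = x i - y i := by rw [ha, hb]; ring
    linarith
  rw [hdiff, abs_le]
  constructor <;> linarith

/-- For distinct points `x, y` of `Δ_k`, the discrete fractal percolation
with parameter `p ∈ (0,1]` at depth `k` satisfies
`P(x, y ∈ Q_d(p;k)) ≤ p^(k + log₂|x-y| - (1/2)log₂ d) = p^k (|x-y|/√d)^(log₂ p)`. -/
theorem statement7 (d k : ℕ) (hd : 1 ≤ d) (hk : 1 ≤ k) (p : ℝ) (hp : p ∈ Set.Ioc (0:ℝ) 1)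
    (Ω : Type) (mΩ : MeasurableSpace Ω) (P : Measure Ω) (hP : IsProbabilityMeasure P)
    (X : TreeEdge d k → Ω → Bool) (hmeas : ∀ e, Measurable (X e))
    (hindep : iIndepFun X P)
    (hmarg : ∀ e, P {ω | X e ω = true} = ENNReal.ofReal p)
    (x y : Zd d) (hx : x ∈ box d k) (hy : y ∈ box d k) (hxy : x ≠ y) :
    P {ω | x ∈ percCluster d k (fun e => X e ω) ∧ y ∈ percCluster d k fun e => X e ω} ≤
      ENNReal.ofReal (p ^ k * (zdist x y / Real.sqrt d) ^ Real.logb 2 p) := by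
  obtain ⟨hp0, hple⟩ := hp
  rcases eq_or_lt_of_le hple with hp1 | hp1
  · -- p = 1 : RHS is 1
    rw [hp1]
    simp only [one_pow, Real.logb_one, Real.rpow_zero, mul_one, ENNReal.ofReal_one]
    exact prob_le_one
  -- main case p < 1
  -- the edge sets of the two root-to-leaf paths
  set fx : Fin k → TreeEdge d k := fun j => (j, ancestorCode d k ((j : ℕ) + 1) x) with hfx
  set fy : Fin k → TreeEdge d k := fun j => (j, ancestorCode d k ((j : ℕ) + 1) y) with hfy
  set Sx : Finset (TreeEdge d k) := Finset.univ.image fx with hSx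
  set Sy : Finset (TreeEdge d k) := Finset.univ.image fy with hSy
  set S : Finset (TreeEdge d k) := Sx ∪ Sy with hS
  set T : Finset (Fin k) :=
    Finset.univ.filter
      (fun j : Fin k => ancestorCode d k ((j : ℕ) + 1) x = ancestorCode d k ((j : ℕ) + 1) y)
    with hT
  set m : ℕ := T.card with hm
  -- event rewriting
  have hev : {ω | x ∈ percCluster d k (fun e => X e ω) ∧
      y ∈ percCluster d k fun e => X e ω} = ⋂ e ∈ S, X e ⁻¹' ({true} : Set Bool) := by
    ext ω
    simp only [mem_setOf_eq, percCluster, Set.mem_iInter, mem_preimage,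
      mem_singleton_iff, hS, Finset.mem_union, hSx, hSy, Finset.mem_image,
      Finset.mem_univ, true_and]
    constructor
    · rintro ⟨⟨-, hxω⟩, ⟨-, hyω⟩⟩ e he
      rcases he with ⟨j, rfl⟩ | ⟨j, rfl⟩
      · exact hxω j
      · exact hyω j
    · intro h
      refine ⟨⟨hx, fun j => h _ (Or.inl ⟨j, rfl⟩)⟩, ⟨hy, fun j => h _ (Or.inr ⟨j, rfl⟩)⟩⟩
  -- independence yields product formula
  have hprod : P (⋂ e ∈ S, X e ⁻¹' ({true} : Set Bool)) =
      ∏ _e ∈ S, ENNReal.ofReal p := by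
    rw [hindep.meas_biInter (fun e _ => ⟨{true}, measurableSet_singleton true, rfl⟩)]
    refine Finset.prod_congr rfl fun e _ => ?_
    rw [show X e ⁻¹' ({true} : Set Bool) = {ω | X e ω = true} from rfl, hmarg e]
  -- injectivity and cardinalities
  have hinjx : Function.Injective fx := fun a b h => by
    simpa [hfx] using congrArg Prod.fst h
  have hinjy : Function.Injective fy := fun a b h => by
    simpa [hfy] using congrArg Prod.fst h
  have hcx : Sx.card = k := by
    rw [hSx, Finset.card_image_of_injective _ hinjx, Finset.card_univ, Fintype.card_fin]
  have hcy : Sy.card = k := by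
    rw [hSy, Finset.card_image_of_injective _ hinjy, Finset.card_univ, Fintype.card_fin]
  have hinterT : Sx ∩ Sy = T.image fx := by
    ext e
    simp only [Finset.mem_inter, hSx, hSy, hT, Finset.mem_image, Finset.mem_univ, true_and,
      Finset.mem_filter]
    constructor
    · rintro ⟨⟨j, rfl⟩, j', hj'⟩
      have hj1 : j' = j := congrArg Prod.fst hj'
      subst hj1
      have hj2 : ancestorCode d k ((j' : ℕ) + 1) y = ancestorCode d k ((j' : ℕ) + 1) x :=
        congrArg Prod.snd hj'
      exact ⟨j', hj2.symm, rfl⟩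
    · rintro ⟨j, hj, rfl⟩
      exact ⟨⟨j, rfl⟩, j, by rw [hfy, hfx]; simp [hj]⟩
  have hcint : (Sx ∩ Sy).card = m := by
    rw [hinterT, Finset.card_image_of_injective _ hinjx]
  have hcardS : S.card + m = 2 * k := by
    have := Finset.card_union_add_card_inter Sx Sy
    rw [← hS, hcint, hcx, hcy] at this
    omega
  have hmk : m ≤ k := by
    have : T.card ≤ (Finset.univ : Finset (Fin k)).card := Finset.card_le_card (Finset.subset_univ T)
    simpa [Finset.card_univ] using this
  -- down-closedness of T and agreement at depth m
  have hdown : ∀ j ∈ T, ∀ j' : Fin k, j' ≤ j → j' ∈ T := by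
    intro j hj j' hj'
    rw [hT, Finset.mem_filter] at hj ⊢
    refine ⟨Finset.mem_univ _, ?_⟩
    exact code_descend x y hx hy ((j' : ℕ) + 1) ((j : ℕ) + 1)
      (by exact_mod_cast Nat.succ_le_succ hj') (by omega) hj.2
  have heqm : ancestorCode d k m x = ancestorCode d k m y := by
    rcases Nat.eq_zero_or_pos m with h0 | hpos
    · rw [h0, code_zero hk x hx, code_zero hk y hy]
    · -- m - 1 ∈ T
      have hmlt : m - 1 < k := by omega
      have hmem : (⟨m - 1, hmlt⟩ : Fin k) ∈ T := by
        by_contra hnot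
        have hsub : T.image (Fin.val) ⊆ Finset.range (m - 1) := by
          intro v hv
          rw [Finset.mem_image] at hv
          obtain ⟨j, hj, rfl⟩ := hv
          rw [Finset.mem_range]
          by_contra hge
          push_neg at hge
          exact hnot (hdown j hj ⟨m - 1, hmlt⟩ (by simpa [Fin.le_def] using hge))
        have hcardim : (T.image Fin.val).card = m :=
          Finset.card_image_of_injective _ Fin.val_injective
        have := Finset.card_le_card hsub
        rw [hcardim, Finset.card_range] at this
        omega
      rw [hT, Finset.mem_filter] at hmem
      have := hmem.2
      simpa [Nat.sub_add_cancel hpos] using this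
  -- distance bound : zdist x y ≤ √d * 2^(k-m)
  have hdistb : zdist x y ≤ Real.sqrt d * 2 ^ (k - m) := by
    have hsum : (∑ i, ((x i - y i : ℤ) : ℝ) ^ 2) ≤ (d : ℝ) * ((2:ℝ) ^ (k - m)) ^ 2 := by
      have hbound : ∀ i ∈ Finset.univ, ((x i - y i : ℤ) : ℝ) ^ 2 ≤ ((2:ℝ) ^ (k - m)) ^ 2 := by
        intro i _
        have h1 : |x i - y i| ≤ 2 ^ (k - m) := coord_bound x y hx hy heqm i
        have h2 : |((x i - y i : ℤ) : ℝ)| ≤ (2:ℝ) ^ (k - m) := by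
          rw [← Int.cast_abs]
          exact_mod_cast h1
        calc ((x i - y i : ℤ) : ℝ) ^ 2 = |((x i - y i : ℤ) : ℝ)| ^ 2 := (sq_abs _).symm
          _ ≤ ((2:ℝ) ^ (k - m)) ^ 2 := by
              apply pow_le_pow_left₀ (abs_nonneg _) h2
      calc (∑ i, ((x i - y i : ℤ) : ℝ) ^ 2) ≤
          (Finset.univ : Finset (Fin d)).card • ((2:ℝ) ^ (k - m)) ^ 2 :=
            Finset.sum_le_card_nsmul _ _ _ hbound
        _ = (d : ℝ) * ((2:ℝ) ^ (k - m)) ^ 2 := by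
            rw [Finset.card_univ, Fintype.card_fin, nsmul_eq_mul]
    calc zdist x y ≤ Real.sqrt ((d : ℝ) * ((2:ℝ) ^ (k - m)) ^ 2) :=
          Real.sqrt_le_sqrt hsum
      _ = Real.sqrt d * 2 ^ (k - m) := by
          rw [Real.sqrt_mul (by positivity), Real.sqrt_sq (by positivity)]
  -- positivity of the distance
  have hdistpos : 0 < zdist x y := by
    apply Real.sqrt_pos.mpr
    obtain ⟨i, hi⟩ : ∃ i, x i ≠ y i := by
      by_contra hc
      push_neg at hc
      exact hxy (funext hc)
    apply Finset.sum_pos' (fun i _ => sq_nonneg _) ⟨i, Finset.mem_univ i, ?_⟩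
    have : x i - y i ≠ 0 := sub_ne_zero.mpr hi
    have : ((x i - y i : ℤ) : ℝ) ≠ 0 := by exact_mod_cast this
    positivity
  have hdpos : (0:ℝ) < Real.sqrt d := Real.sqrt_pos.mpr (by exact_mod_cast hd)
  set r : ℝ := zdist x y / Real.sqrt d with hr
  have hrpos : 0 < r := div_pos hdistpos hdpos
  have hrle : r ≤ 2 ^ (k - m) := by
    rw [hr, div_le_iff₀ hdpos]
    linarith [hdistb]
  -- the real inequality p^(S.card) ≤ p^k * r^(logb 2 p)
  have hlogr : Real.logb 2 r ≤ (k - m : ℕ) := by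
    rw [Real.logb_le_iff_le_rpow one_lt_two hrpos, Real.rpow_natCast]
    exact hrle
  have hexp : p ^ S.card ≤ p ^ k * r ^ Real.logb 2 p := by
    have hScard : S.card = k + (k - m) := by omega
    rw [hScard, pow_add]
    apply mul_le_mul_of_nonneg_left _ (by positivity)
    -- p ^ (k-m) ≤ r ^ logb 2 p
    have hlogp : Real.log p < 0 := Real.log_neg hp0 hp1
    have key : ((k - m : ℕ) : ℝ) * Real.log p ≤ Real.log r * Real.logb 2 p := by
      have h2 : Real.log r * Real.logb 2 p = Real.logb 2 r * Real.log p := by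
        rw [Real.logb, Real.logb]; ring
      rw [h2]
      -- need: (k-m) * log p ≤ logb 2 r * log p, i.e. reversed by negativity
      apply mul_le_mul_of_nonpos_right hlogr (le_of_lt hlogp)
    calc p ^ (k - m : ℕ) = p ^ ((k - m : ℕ) : ℝ) := (Real.rpow_natCast p _).symm
      _ = Real.exp (Real.log p * ((k - m : ℕ) : ℝ)) := Real.rpow_def_of_pos hp0 _
      _ ≤ Real.exp (Real.log r * Real.logb 2 p) := by
          rw [Real.exp_le_exp]; rw [mul_comm]; exact key
      _ = r ^ Real.logb 2 p := (Real.rpow_def_of_pos hrpos _).symm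
  -- assemble
  rw [hev, hprod, Finset.prod_const, ← ENNReal.ofReal_pow (le_of_lt hp0)]
  exact ENNReal.ofReal_le_ofReal hexp
end
end

section
/- Let d ≥ 1 and let p, q ∈ (0,1) satisfy p, q > 2^{−d} and β := −log₂(2^d p q) > 0. Then there exists a constant c > 0 depending only on d, p, q such that the following holds. Let 1 ≤ m ≤ n, let A ⊆ [−2^{n−1} − 2^{m−1}, 2^{n−1} + 2^{m−1})^d ∩ ℤ^d be a nonempty finite set, and let (a_{ij})_{1 ≤ i ≤ 2^{dm}, 1 ≤ j ≤ 2^{dn}} be any nonnegative coefficients with a_{ij} = 0 whenever i⊕j ∉ A and Σ_{i,j} a_{ij} = 1. Then (2^d p)^{max(log₂(diam(A) ∨ 1), m)} · Σ_{i,i',j,j'} a_{ij} a_{i'j'} p^{h^m_{ii'}} q^{h^n_{jj'}} ≥ c·p^m · Σ_{i,i',j,j'} a_{ij} a_{i'j'} (|i⊕j − i'⊕j'| ∨ 1)^{−β}. -/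
open MeasureTheory ProbabilityTheory Set Pointwise
open scoped ENNReal Classical

noncomputable section

/-- The `t`-th leaf (`0`-indexed, `t < 2^(d*k)`) of the `2^d`-ary tree of height `k` in the
lexicographic order of digit strings, as a point of `Δ_k`: the digit string of the leaf,
read as a base-2 expansion (most significant symbol first, coordinates ordered within each
symbol), is the binary expansion of `t`. -/
def leafOfIdx (d k : ℕ) (t : ℕ) : Zd d :=
  fun i => ((∑ j ∈ Finset.range k,
      (t / 2 ^ (d * (k - 1 - j) + (d - 1 - (i : ℕ)))) % 2 * 2 ^ (k - 1 - j) : ℕ) : ℤ)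
    - 2 ^ (k - 1)

/-- The depth of the most recent common ancestor of the leaves of `x, y ∈ Δ_k` in the
`2^d`-ary tree of height `k`, i.e. the length of the common prefix of their digit strings. -/
def commonDepth (d k : ℕ) (x y : Zd d) : ℕ :=
  (Finset.range (k + 1)).sup fun ℓ => if ancestorCode d k ℓ x = ancestorCode d k ℓ y then ℓ else 0

/-- The graph distance from the leaf of `x` to the most recent common ancestor of the leaves
of `x, y ∈ Δ_k` in the `2^d`-ary tree of height `k`. -/
def treeDist (d k : ℕ) (x y : Zd d) : ℕ := k - commonDepth d k x y

section S10aux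
open Finset


/-- euclidean-style division composition -/
lemma s10_ediv_ediv (a : ℤ) {b c : ℤ} (hb : 0 < b) (hc : 0 < c) : a / b / c = a / (b * c) := by
  have hbc : 0 < b * c := mul_pos hb hc
  apply le_antisymm
  · have h1 : a < (a / (b*c) + 1) * (b*c) := Int.lt_ediv_add_one_mul_self a hbc
    have h2 : a / b < (a / (b*c) + 1) * c := by
      rw [Int.ediv_lt_iff_lt_mul hb]
      calc a < (a / (b*c) + 1) * (b*c) := h1
        _ = (a / (b*c) + 1) * c * b := by ring
    have h3 : a / b / c < a / (b*c) + 1 := by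
      rw [Int.ediv_lt_iff_lt_mul hc]; exact h2
    omega
  · rw [Int.le_ediv_iff_mul_le hc, Int.le_ediv_iff_mul_le hb]
    calc a / (b*c) * c * b = a / (b*c) * (b*c) := by ring
      _ ≤ a := Int.ediv_mul_le a hbc.ne'

lemma ediv_le_ediv_add {a b B u : ℤ} (hu : 0 < u) (h : a ≤ b + B * u) : a / u ≤ b / u + B := by
  have := Int.ediv_le_ediv hu h
  rwa [Int.add_mul_ediv_right _ _ hu.ne'] at this

lemma abs_ediv_sub {a b B u : ℤ} (hu : 0 < u) (h : |a - b| ≤ B * u) : |a / u - b / u| ≤ B := by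
  rw [abs_le] at h ⊢
  constructor
  · have : b ≤ a + B * u := by linarith
    have := ediv_le_ediv_add hu this
    linarith
  · have : a ≤ b + B * u := by linarith
    have := ediv_le_ediv_add hu this
    linarith

lemma ediv_add_ediv_le (a b : ℤ) {u : ℤ} (hu : 0 < u) :
    a / u + b / u ≤ (a + b) / u ∧ (a + b) / u ≤ a / u + b / u + 1 := by
  have ha := Int.mul_ediv_add_emod a u
  have hb := Int.mul_ediv_add_emod b u
  have hab : a + b = (a % u + b % u) + (a / u + b / u) * u := by
    linear_combination - ha - hb
  have h2 : (a + b) / u = (a % u + b % u) / u + (a / u + b / u) := by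
    rw [hab, Int.add_mul_ediv_right _ _ hu.ne']
  have hm1 : 0 ≤ a % u := Int.emod_nonneg a hu.ne'
  have hm2 : 0 ≤ b % u := Int.emod_nonneg b hu.ne'
  have hl1 : a % u < u := Int.emod_lt_of_pos a hu
  have hl2 : b % u < u := Int.emod_lt_of_pos b hu
  have h3 : 0 ≤ (a % u + b % u) / u := Int.ediv_nonneg (by omega) hu.le
  have h4 : (a % u + b % u) / u < 2 := by
    rw [Int.ediv_lt_iff_lt_mul hu]; omega
  omega

lemma s10_ediv_nonneg_lt {a : ℤ} {k σ : ℕ} (h0 : 0 ≤ a) (h1 : a < 2 ^ k) (hσ : σ ≤ k) :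
    0 ≤ a / 2 ^ σ ∧ a / 2 ^ σ < 2 ^ (k - σ) := by
  constructor
  · exact Int.ediv_nonneg h0 (by positivity)
  · rw [Int.ediv_lt_iff_lt_mul (by positivity)]
    calc a < 2 ^ k := h1
      _ = 2 ^ (k - σ) * 2 ^ σ := by rw [← pow_add]; congr 1; omega



lemma nat_geom (k : ℕ) : ∑ j ∈ Finset.range k, 2 ^ j = 2 ^ k - 1 := by
  induction k with
  | zero => simp
  | succ k ih =>
    rw [Finset.sum_range_succ, ih, pow_succ]
    have := Nat.one_le_two_pow (n := k)
    omega

/-- numerator of `leafOfIdx` coordinates is in `[0, 2^k)`. -/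
lemma leaf_coord (d k t : ℕ) (i : Fin d) :
    0 ≤ leafOfIdx d k t i + 2 ^ (k - 1) ∧ leafOfIdx d k t i + 2 ^ (k - 1) < 2 ^ k := by
  have hS : (∑ j ∈ Finset.range k,
      (t / 2 ^ (d * (k - 1 - j) + (d - 1 - (i : ℕ)))) % 2 * 2 ^ (k - 1 - j) : ℕ) < 2 ^ k := by
    have h1 : (∑ j ∈ Finset.range k,
        (t / 2 ^ (d * (k - 1 - j) + (d - 1 - (i : ℕ)))) % 2 * 2 ^ (k - 1 - j) : ℕ)
        ≤ ∑ j ∈ Finset.range k, 2 ^ (k - 1 - j) := by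
      apply Finset.sum_le_sum
      intro j _
      have : (t / 2 ^ (d * (k - 1 - j) + (d - 1 - (i : ℕ)))) % 2 ≤ 1 := by omega
      calc _ ≤ 1 * 2 ^ (k - 1 - j) := Nat.mul_le_mul_right _ this
        _ = 2 ^ (k - 1 - j) := one_mul _
    have h2 : ∑ j ∈ Finset.range k, 2 ^ (k - 1 - j) = 2 ^ k - 1 := by
      rw [Finset.sum_range_reflect (fun j => 2 ^ j) k, nat_geom]
    have := Nat.one_le_two_pow (n := k)
    omega
  unfold leafOfIdx
  constructor
  · simp only [sub_add_cancel]
    positivity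
  · simp only [sub_add_cancel]
    exact_mod_cast hS

lemma commonDepth_le (d k : ℕ) (x y : Zd d) : commonDepth d k x y ≤ k := by
  apply Finset.sup_le
  intro ℓ hℓ
  rw [Finset.mem_range] at hℓ
  split <;> omega

lemma treeDist_le (d k : ℕ) (x y : Zd d) : treeDist d k x y ≤ k := Nat.sub_le _ _

lemma code_step {d k ℓ ℓ' : ℕ} (h1 : ℓ ≤ ℓ') (h2 : ℓ' ≤ k) (x : Zd d) (i : Fin d) :
    ancestorCode d k ℓ x i = ancestorCode d k ℓ' x i / 2 ^ (ℓ' - ℓ) := by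
  unfold ancestorCode
  rw [s10_ediv_ediv _ (by positivity) (by positivity), ← pow_add]
  congr 2
  omega

lemma code_eq_of_le {d k ℓ ℓ' : ℕ} (h1 : ℓ ≤ ℓ') (h2 : ℓ' ≤ k) {x y : Zd d}
    (h : ancestorCode d k ℓ' x = ancestorCode d k ℓ' y) :
    ancestorCode d k ℓ x = ancestorCode d k ℓ y := by
  funext i
  rw [code_step h1 h2 x i, code_step h1 h2 y i, congrFun h i]

lemma treeDist_le_of_code_eq {d k lam : ℕ} (hlam : lam ≤ k) {x y : Zd d}
    (h : ancestorCode d k lam x = ancestorCode d k lam y) :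
    treeDist d k x y ≤ k - lam := by
  have h1 : lam ≤ commonDepth d k x y := by
    have hmem : lam ∈ Finset.range (k + 1) := by
      rw [Finset.mem_range]; omega
    have := Finset.le_sup (f := fun ℓ =>
      if ancestorCode d k ℓ x = ancestorCode d k ℓ y then ℓ else 0) hmem
    simpa [h, commonDepth] using this
  unfold treeDist
  omega

/-- tree distance bound implies equal ancestor codes (needs `lam ≥ 1`). -/
lemma code_eq_of_treeDist_le {d k lam : ℕ} (hlam1 : 1 ≤ lam) (hlam : lam ≤ k) {x y : Zd d}
    (h : treeDist d k x y ≤ k - lam) :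
    ancestorCode d k lam x = ancestorCode d k lam y := by
  have hcd : lam ≤ commonDepth d k x y := by
    have := commonDepth_le d k x y
    unfold treeDist at h
    omega
  obtain ⟨ℓs, hmem, hsup⟩ := Finset.exists_mem_eq_sup (Finset.range (k + 1))
    ⟨0, by simp⟩ (fun ℓ => if ancestorCode d k ℓ x = ancestorCode d k ℓ y then ℓ else 0)
  rw [commonDepth, hsup] at hcd
  by_cases heq : ancestorCode d k ℓs x = ancestorCode d k ℓs y
  · rw [if_pos heq] at hcd
    rw [Finset.mem_range] at hmem
    exact code_eq_of_le hcd (by omega) heq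
  · rw [if_neg heq] at hcd
    omega

end S10aux


section S10comb
open Finset

variable {I : Type*} [Fintype I] {α : Type*} [DecidableEq α]

/-- total mass of the fiber of `g` over `C`. -/
def fibSum (b : I → ℝ) (g : I → α) (C : α) : ℝ :=
  ∑ z ∈ Finset.univ.filter (fun z => g z = C), b z

lemma fibSum_nonneg {b : I → ℝ} (hb : ∀ z, 0 ≤ b z) (g : I → α) (C : α) :
    0 ≤ fibSum b g C :=
  Finset.sum_nonneg fun z _ => hb z

lemma fibSum_eq_zero {b : I → ℝ} {g : I → α} {C : α}
    (h : C ∉ Finset.univ.image g) : fibSum b g C = 0 := by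
  unfold fibSum
  rw [Finset.sum_eq_zero]
  intro z hz
  rw [Finset.mem_filter] at hz
  exact absurd (hz.2 ▸ Finset.mem_image_of_mem g (Finset.mem_univ z)) h

lemma sum_mul_comp (b : I → ℝ) (g : I → α) (t : α → ℝ) :
    ∑ z, b z * t (g z) = ∑ C ∈ Finset.univ.image g, fibSum b g C * t C := by
  rw [← Finset.sum_fiberwise_of_maps_to
    (fun z _ => Finset.mem_image_of_mem g (Finset.mem_univ z)) (fun z => b z * t (g z))]
  refine Finset.sum_congr rfl fun C _ => ?_
  unfold fibSum
  rw [Finset.sum_mul]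
  refine Finset.sum_congr rfl fun z hz => ?_
  rw [Finset.mem_filter] at hz
  rw [hz.2]

lemma inner_ind (b : I → ℝ) (g : I → α) (C : α) :
    ∑ z', b z' * (if g z' = C then (1:ℝ) else 0) = fibSum b g C := by
  unfold fibSum
  rw [Finset.sum_filter]
  refine Finset.sum_congr rfl fun z _ => ?_
  split <;> simp

lemma double_shift (b : I → ℝ) (g : I → α) (w : α → α) :
    ∑ z, ∑ z', b z * b z' * (if g z' = w (g z) then (1:ℝ) else 0)
      = ∑ C ∈ Finset.univ.image g, fibSum b g C * fibSum b g (w C) := by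
  rw [← sum_mul_comp b g (fun C => fibSum b g (w C))]
  refine Finset.sum_congr rfl fun z _ => ?_
  rw [← inner_ind b g (w (g z)), Finset.mul_sum]
  refine Finset.sum_congr rfl fun z' _ => by ring

lemma double_eq (b : I → ℝ) (g : I → α) :
    ∑ z, ∑ z', b z * b z' * (if g z = g z' then (1:ℝ) else 0)
      = ∑ C ∈ Finset.univ.image g, fibSum b g C ^ 2 := by
  calc (∑ z, ∑ z', b z * b z' * (if g z = g z' then (1:ℝ) else 0))
      = ∑ z, ∑ z', b z * b z' * (if g z' = id (g z) then (1:ℝ) else 0) := by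
        refine Finset.sum_congr rfl fun z _ => Finset.sum_congr rfl fun z' _ => ?_
        congr 1
        by_cases h : g z = g z' <;> simp [h, eq_comm]
    _ = ∑ C ∈ Finset.univ.image g, fibSum b g C * fibSum b g (id C) := double_shift b g id
    _ = ∑ C ∈ Finset.univ.image g, fibSum b g C ^ 2 := by simp [pow_two]

lemma corr_le (b : I → ℝ) (hb : ∀ z, 0 ≤ b z) (g : I → α) (w : α → α)
    (hw : Function.Injective w) :
    ∑ z, ∑ z', b z * b z' * (if g z' = w (g z) then (1:ℝ) else 0)
      ≤ ∑ z, ∑ z', b z * b z' * (if g z = g z' then (1:ℝ) else 0) := by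
  rw [double_shift b g w, double_eq b g]
  set T := Finset.univ.image g with hT
  have hwsq : ∑ C ∈ T, fibSum b g (w C) ^ 2 ≤ ∑ C ∈ T, fibSum b g C ^ 2 := by
    rw [← Finset.sum_image (g := w) (f := fun C => fibSum b g C ^ 2)
      (fun x _ y _ h => hw h)]
    have h1 : T.image w ⊆ T ∪ T.image w := Finset.subset_union_right
    have h2 : T ⊆ T ∪ T.image w := Finset.subset_union_left
    calc ∑ C ∈ T.image w, fibSum b g C ^ 2
        ≤ ∑ C ∈ T ∪ T.image w, fibSum b g C ^ 2 :=
          Finset.sum_le_sum_of_subset_of_nonneg h1 (fun C _ _ => sq_nonneg _)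
      _ = ∑ C ∈ T, fibSum b g C ^ 2 := by
          refine (Finset.sum_subset h2 fun C _ hC => ?_).symm
          rw [fibSum_eq_zero hC]
          ring
  have hcs := Finset.sum_mul_sq_le_sq_mul_sq T (fun C => fibSum b g C)
    (fun C => fibSum b g (w C))
  have h0 : 0 ≤ ∑ C ∈ T, fibSum b g C * fibSum b g (w C) :=
    Finset.sum_nonneg fun C _ => mul_nonneg (fibSum_nonneg hb g C) (fibSum_nonneg hb g _)
  have h1 : 0 ≤ ∑ C ∈ T, fibSum b g C ^ 2 := Finset.sum_nonneg fun C _ => sq_nonneg _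
  nlinarith [hcs, hwsq, h0, h1]

lemma refine_le {β : Type*} [DecidableEq β] (b : I → ℝ) (hb : ∀ z, 0 ≤ b z)
    (f : I → α) (g : I → β) (π : β → α) (hπ : ∀ z, π (g z) = f z) (N : ℕ)
    (hN : ∀ C : α, (((Finset.univ : Finset I).image g).filter (fun e => π e = C)).card ≤ N) :
    ∑ z, ∑ z', b z * b z' * (if f z = f z' then (1:ℝ) else 0)
      ≤ (N : ℝ) * ∑ z, ∑ z', b z * b z' * (if g z = g z' then (1:ℝ) else 0) := by
  rw [double_eq b f, double_eq b g]
  have key : ∀ C ∈ Finset.univ.image f, fibSum b f C ^ 2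
      ≤ (N : ℝ) * ∑ e ∈ ((Finset.univ : Finset I).image g).filter (fun e => π e = C),
        fibSum b g e ^ 2 := by
    intro C _
    set E := ((Finset.univ : Finset I).image g).filter (fun e => π e = C) with hE
    have hfib : fibSum b f C = ∑ e ∈ E, fibSum b g e := by
      unfold fibSum
      rw [← Finset.sum_fiberwise_of_maps_to (s := Finset.univ.filter (fun z => f z = C))
        (g := g) (t := E) ?_ b]
      · refine Finset.sum_congr rfl fun e he => ?_
        rw [hE, Finset.mem_filter] at he
        refine Finset.sum_congr ?_ fun _ _ => rfl
        ext z
        simp only [Finset.mem_filter, Finset.mem_univ, true_and]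
        constructor
        · exact fun h => h.2
        · intro h
          exact ⟨by rw [← hπ z, h, he.2], h⟩
      · intro z hz
        rw [Finset.mem_filter] at hz
        rw [hE, Finset.mem_filter]
        exact ⟨Finset.mem_image_of_mem g (Finset.mem_univ z), by rw [hπ z, hz.2]⟩
    rw [hfib]
    have hcs := Finset.sum_mul_sq_le_sq_mul_sq E (fun _ => (1:ℝ)) (fun e => fibSum b g e)
    simp only [one_pow, one_mul, Finset.sum_const, nsmul_eq_mul, mul_one] at hcs
    calc (∑ e ∈ E, fibSum b g e) ^ 2 ≤ (E.card : ℝ) * ∑ e ∈ E, fibSum b g e ^ 2 := hcs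
      _ ≤ (N : ℝ) * ∑ e ∈ E, fibSum b g e ^ 2 := by
          apply mul_le_mul_of_nonneg_right
          · exact_mod_cast hN C
          · exact Finset.sum_nonneg fun e _ => sq_nonneg _
  calc ∑ C ∈ Finset.univ.image f, fibSum b f C ^ 2
      ≤ ∑ C ∈ Finset.univ.image f, (N : ℝ) *
          ∑ e ∈ ((Finset.univ : Finset I).image g).filter (fun e => π e = C),
            fibSum b g e ^ 2 := Finset.sum_le_sum key
    _ = (N : ℝ) * ∑ C ∈ Finset.univ.image f,
          ∑ e ∈ ((Finset.univ : Finset I).image g).filter (fun e => π e = C),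
            fibSum b g e ^ 2 := by rw [Finset.mul_sum]
    _ = (N : ℝ) * ∑ e ∈ (Finset.univ : Finset I).image g, fibSum b g e ^ 2 := by
        congr 1
        apply Finset.sum_fiberwise_of_maps_to
        intro e he
        rw [Finset.mem_image] at he
        obtain ⟨z, _, rfl⟩ := he
        rw [hπ z]
        exact Finset.mem_image_of_mem f (Finset.mem_univ z)

end S10comb

section S10scalar
open Finset

lemma s10_geom_le {x : ℝ} (h0 : 0 ≤ x) (h1 : x < 1) (k : ℕ) :
    ∑ t ∈ Finset.range k, x ^ t ≤ (1 - x)⁻¹ := by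
  have hpos : (0:ℝ) < 1 - x := by linarith
  rw [geom_sum_eq (ne_of_lt h1)]
  have h2 : (x ^ k - 1) / (x - 1) = (1 - x ^ k) / (1 - x) := by
    rw [← neg_div_neg_eq]
    ring_nf
  rw [h2]
  rw [div_le_iff₀ hpos]
  have : x ^ k ≥ 0 := by positivity
  rw [inv_mul_cancel₀ hpos.ne']
  linarith

lemma s10_geom_le' {r : ℝ} (hr : 1 < r) (T : ℕ) :
    ∑ s ∈ Finset.range (T + 1), r ^ s ≤ r ^ T * (r * (r - 1)⁻¹) := by
  have hpos : (0:ℝ) < r - 1 := by linarith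
  rw [geom_sum_eq (ne_of_gt hr)]
  rw [div_le_iff₀ hpos]
  have h1 : r ^ T * (r * (r - 1)⁻¹) * (r - 1) = r ^ (T + 1) := by
    field_simp
    ring
  rw [h1]
  have : (1:ℝ) ≥ 0 := by norm_num
  linarith

lemma s10_riesz_decomp {x : ℝ} (hx0 : 0 < x) (hx1 : x < 1) {D : ℝ} (hD0 : 0 ≤ D) (T : ℕ)
    (hDT : D ≤ 2 ^ T) :
    max D 1 ^ Real.logb 2 x
      ≤ x⁻¹ * ∑ s ∈ Finset.range (T + 1), x ^ s * (if D ≤ 2 ^ s then (1:ℝ) else 0) := by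
  have hex : ∃ s : ℕ, D ≤ 2 ^ s := ⟨T, hDT⟩
  have hs0T : Nat.find hex ≤ T := Nat.find_le hDT
  set s₀ := Nat.find hex with hs₀
  have hsum : x ^ s₀ ≤ ∑ s ∈ Finset.range (T + 1), x ^ s * (if D ≤ 2 ^ s then (1:ℝ) else 0) := by
    have hmem : s₀ ∈ Finset.range (T + 1) := by rw [Finset.mem_range]; omega
    have hterm : x ^ s₀ * (if D ≤ 2 ^ s₀ then (1:ℝ) else 0) = x ^ s₀ := by
      rw [if_pos (Nat.find_spec hex), mul_one]
    calc x ^ s₀ = x ^ s₀ * (if D ≤ 2 ^ s₀ then (1:ℝ) else 0) := hterm.symm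
      _ ≤ _ := Finset.single_le_sum (f := fun s => x ^ s * (if D ≤ 2 ^ s then (1:ℝ) else 0))
          (fun s _ => by positivity) hmem
  have hmain : max D 1 ^ Real.logb 2 x ≤ x⁻¹ * x ^ s₀ := by
    rcases Nat.eq_zero_or_pos s₀ with h0 | hpos
    · have hD1 : D ≤ 1 := by
        have := Nat.find_spec hex
        rw [← hs₀, h0] at this
        simpa using this
      rw [max_eq_right hD1, Real.one_rpow, h0, pow_zero, mul_one]
      exact one_le_inv_iff₀.mpr ⟨hx0, hx1.le⟩
    · obtain ⟨t, ht⟩ : ∃ t, s₀ = t + 1 := ⟨s₀ - 1, by omega⟩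
      have hDgt : ¬ D ≤ 2 ^ t := Nat.find_min hex (by omega)
      push_neg at hDgt
      have h2t : (1:ℝ) ≤ 2 ^ t := one_le_pow₀ (by norm_num)
      have hD1 : 1 < D := lt_of_le_of_lt h2t hDgt
      rw [max_eq_left hD1.le]
      have hxinv : x⁻¹ * x ^ s₀ = x ^ t := by
        rw [ht, pow_succ']
        rw [← mul_assoc, inv_mul_cancel₀ hx0.ne', one_mul]
      rw [hxinv]
      have hD0' : (0:ℝ) < D := by linarith
      have e1 : (2:ℝ) ^ (Real.logb 2 D * Real.logb 2 x) = D ^ Real.logb 2 x := by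
        rw [Real.rpow_mul (by norm_num : (0:ℝ) ≤ 2),
          Real.rpow_logb (by norm_num) (by norm_num) hD0']
      have e2 : (2:ℝ) ^ (Real.logb 2 x * Real.logb 2 D) = x ^ Real.logb 2 D := by
        rw [Real.rpow_mul (by norm_num : (0:ℝ) ≤ 2),
          Real.rpow_logb (by norm_num) (by norm_num) hx0]
      have hid : D ^ Real.logb 2 x = x ^ Real.logb 2 D := by
        rw [← e1, ← e2, mul_comm]
      rw [hid]
      have hexp : (t : ℝ) ≤ Real.logb 2 D := by
        have h1 : Real.logb 2 ((2:ℝ) ^ (t:ℝ)) ≤ Real.logb 2 D := by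
          apply Real.logb_le_logb_of_le (by norm_num) (by positivity)
          rw [Real.rpow_natCast]
          exact hDgt.le
        have h2 : Real.logb 2 ((2:ℝ) ^ (t:ℝ)) = (t:ℝ) := by
          rw [Real.logb_rpow] <;> norm_num
        rwa [h2] at h1
      calc x ^ Real.logb 2 D ≤ x ^ ((t : ℕ) : ℝ) :=
          Real.rpow_le_rpow_of_exponent_ge hx0 hx1.le hexp
        _ = x ^ t := Real.rpow_natCast x t
  calc max D 1 ^ Real.logb 2 x ≤ x⁻¹ * x ^ s₀ := hmain
    _ ≤ _ := by
      apply mul_le_mul_of_nonneg_left hsum (by positivity)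

end S10scalar



section S10main
open Finset

variable {I : Type*} [Fintype I]

lemma s10_coord_le_zdist {d : ℕ} (x y : Zd d) (i : Fin d) :
    |((x i - y i : ℤ) : ℝ)| ≤ zdist x y := by
  unfold zdist
  rw [← Real.sqrt_sq_eq_abs]
  exact Real.sqrt_le_sqrt (Finset.single_le_sum
    (f := fun j => ((x j - y j : ℤ) : ℝ) ^ 2) (fun j _ => sq_nonneg _) (Finset.mem_univ i))

lemma s10_coord_int {d : ℕ} {x y : Zd d} (i : Fin d) {s : ℕ}
    (h : zdist x y ≤ 2 ^ s) : |x i - y i| ≤ 2 ^ s := by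
  have h1 : |((x i - y i : ℤ) : ℝ)| ≤ ((2 ^ s : ℤ) : ℝ) := by
    refine le_trans (s10_coord_le_zdist x y i) ?_
    rw [show (((2:ℤ) ^ s : ℤ) : ℝ) = (2:ℝ) ^ s by push_cast; ring]
    exact h
  rw [← Int.cast_abs] at h1
  exact_mod_cast h1

lemma s10_geom_tail {y : ℝ} (h0 : 0 ≤ y) (h1 : y < 1) (m σ : ℕ) :
    ∑ s ∈ Finset.range m, y ^ s * (if σ ≤ s then (1:ℝ) else 0) ≤ y ^ σ * (1 - y)⁻¹ := by
  have h2 : ∑ s ∈ Finset.range m, y ^ s * (if σ ≤ s then (1:ℝ) else 0)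
      = ∑ s ∈ Finset.Ico σ m, y ^ s := by
    have h3 : (Finset.range m).filter (fun s => σ ≤ s) = Finset.Ico σ m := by
      ext s
      simp only [Finset.mem_filter, Finset.mem_range, Finset.mem_Ico]
      omega
    rw [← h3, Finset.sum_filter]
    refine Finset.sum_congr rfl fun s _ => ?_
    split <;> ring
  rw [h2, Finset.sum_Ico_eq_sum_range]
  have h4 : ∀ k, y ^ (σ + k) = y ^ σ * y ^ k := fun k => pow_add y σ k
  rw [Finset.sum_congr rfl (fun k _ => h4 k), ← Finset.mul_sum]
  exact mul_le_mul_of_nonneg_left (s10_geom_le h0 h1 _) (pow_nonneg h0 σ)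

lemma s10_card_piIcc (d : ℕ) (R : ℤ) (_hR : 0 ≤ R) :
    (Fintype.piFinset (fun _ : Fin d => Finset.Icc (-R) R)).card = (2 * R + 1).toNat ^ d := by
  rw [Fintype.card_piFinset]
  have h1 : ∀ i : Fin d, (Finset.Icc (-R) R).card = (2 * R + 1).toNat := by
    intro i
    rw [Int.card_Icc]
    congr 1
    omega
  rw [Finset.prod_congr rfl (fun i _ => h1 i), Finset.prod_const, Finset.card_univ,
    Fintype.card_fin]

lemma s10_mid_bound {d m n s : ℕ} (hmn : m ≤ n) (hms : m ≤ s)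
    {q : ℝ} (hq0 : 0 < q) (hq1 : q < 1)
    (b : I → ℝ) (hb : ∀ z, 0 ≤ b z) (xm xn : I → Zd d)
    (hxm : ∀ z i, 0 ≤ xm z i + 2 ^ (m - 1) ∧ xm z i + 2 ^ (m - 1) < 2 ^ m)
    (hxn : ∀ z i, 0 ≤ xn z i + 2 ^ (n - 1) ∧ xn z i + 2 ^ (n - 1) < 2 ^ n) :
    ∑ z, ∑ z', b z * b z' *
        (if zdist (xm z + xn z) (xm z' + xn z') ≤ 2 ^ s then (1:ℝ) else 0)
      ≤ 5 ^ d * ((q ^ min s n)⁻¹ *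
        ∑ z, ∑ z', b z * b z' * q ^ treeDist d n (xn z) (xn z')) := by
  classical
  set ℓ := n - min s n with hℓ
  have hℓn : ℓ ≤ n := by omega
  have hnℓ : n - ℓ = min s n := by omega
  set vc : I → Zd d := fun z => ancestorCode d n ℓ (xn z) with hvc
  set W : Finset (Zd d) := Fintype.piFinset (fun _ : Fin d => Finset.Icc (-2 : ℤ) 2) with hW
  -- pointwise indicator bound
  have hpt : ∀ z z' : I, (if zdist (xm z + xn z) (xm z' + xn z') ≤ 2 ^ s then (1:ℝ) else 0)
      ≤ ∑ w ∈ W, (if vc z' = vc z + w then (1:ℝ) else 0) := by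
    intro z z'
    by_cases hD : zdist (xm z + xn z) (xm z' + xn z') ≤ 2 ^ s
    · rw [if_pos hD]
      have hwmem : vc z' - vc z ∈ W := by
        rw [hW, Fintype.mem_piFinset]
        intro i
        rw [Finset.mem_Icc, ← abs_le]
        have happ : (vc z' - vc z) i = vc z' i - vc z i := rfl
        rw [happ]
        have hcoordX : |(xm z + xn z) i - (xm z' + xn z') i| ≤ 2 ^ s :=
          s10_coord_int i hD
        have hXapp : (xm z + xn z) i = xm z i + xn z i := rfl
        have hXapp' : (xm z' + xn z') i = xm z' i + xn z' i := rfl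
        rw [hXapp, hXapp'] at hcoordX
        have hvcz : vc z i = (xn z i + 2 ^ (n - 1)) / 2 ^ (n - ℓ) := rfl
        have hvcz' : vc z' i = (xn z' i + 2 ^ (n - 1)) / 2 ^ (n - ℓ) := rfl
        rw [hvcz, hvcz']
        apply abs_ediv_sub (by positivity)
        have hsub : (xn z' i + 2 ^ (n - 1)) - (xn z i + 2 ^ (n - 1)) = xn z' i - xn z i := by
          ring
        rw [hsub, hnℓ]
        rcases le_or_gt s n with hsn | hsn
        · rw [min_eq_left hsn]
          have hXm := hxm z i
          have hXm' := hxm z' i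
          have h2m : (2:ℤ) ^ m ≤ 2 ^ s := pow_le_pow_right₀ (by norm_num) hms
          rw [abs_le] at hcoordX ⊢
          constructor <;> linarith [hcoordX.1, hcoordX.2, hXm.1, hXm.2, hXm'.1, hXm'.2]
        · rw [min_eq_right hsn.le]
          have hXn := hxn z i
          have hXn' := hxn z' i
          rw [abs_le]
          constructor <;> linarith [hXn.1, hXn.2, hXn'.1, hXn'.2]
      calc (1:ℝ) = (if vc z' = vc z + (vc z' - vc z) then (1:ℝ) else 0) := by
            rw [if_pos (by abel)]
        _ ≤ ∑ w ∈ W, (if vc z' = vc z + w then (1:ℝ) else 0) := by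
            apply Finset.single_le_sum (f := fun w => (if vc z' = vc z + w then (1:ℝ) else 0))
              (fun w _ => by
                show (0:ℝ) ≤ if vc z' = vc z + w then (1:ℝ) else 0
                split <;> norm_num) hwmem
    · rw [if_neg hD]
      exact Finset.sum_nonneg fun w _ => by split <;> norm_num
  -- sum the pointwise bound and swap sums
  have hsum1 : ∑ z, ∑ z', b z * b z' *
        (if zdist (xm z + xn z) (xm z' + xn z') ≤ 2 ^ s then (1:ℝ) else 0)
      ≤ ∑ w ∈ W, ∑ z, ∑ z', b z * b z' * (if vc z' = vc z + w then (1:ℝ) else 0) := by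
    have h1 : ∑ z, ∑ z', b z * b z' *
          (if zdist (xm z + xn z) (xm z' + xn z') ≤ 2 ^ s then (1:ℝ) else 0)
        ≤ ∑ z, ∑ z', ∑ w ∈ W, b z * b z' * (if vc z' = vc z + w then (1:ℝ) else 0) := by
      refine Finset.sum_le_sum fun z _ => Finset.sum_le_sum fun z' _ => ?_
      rw [← Finset.mul_sum]
      exact mul_le_mul_of_nonneg_left (hpt z z') (mul_nonneg (hb z) (hb z'))
    refine le_trans h1 (le_of_eq ?_)
    calc ∑ z, ∑ z', ∑ w ∈ W, b z * b z' * (if vc z' = vc z + w then (1:ℝ) else 0)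
        = ∑ z, ∑ w ∈ W, ∑ z', b z * b z' * (if vc z' = vc z + w then (1:ℝ) else 0) :=
          Finset.sum_congr rfl fun z _ => Finset.sum_comm
      _ = ∑ w ∈ W, ∑ z, ∑ z', b z * b z' * (if vc z' = vc z + w then (1:ℝ) else 0) :=
          Finset.sum_comm
  have hcorr : ∀ w ∈ W, ∑ z, ∑ z', b z * b z' * (if vc z' = vc z + w then (1:ℝ) else 0)
      ≤ ∑ z, ∑ z', b z * b z' * (if vc z = vc z' then (1:ℝ) else 0) :=
    fun w _ => corr_le b hb vc (fun C => C + w) (add_left_injective w)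
  have hdiag : ∑ z, ∑ z', b z * b z' * (if vc z = vc z' then (1:ℝ) else 0)
      ≤ (q ^ min s n)⁻¹ * ∑ z, ∑ z', b z * b z' * q ^ treeDist d n (xn z) (xn z') := by
    rw [Finset.mul_sum]
    refine Finset.sum_le_sum fun z _ => ?_
    rw [Finset.mul_sum]
    refine Finset.sum_le_sum fun z' _ => ?_
    by_cases hvv : vc z = vc z'
    · rw [if_pos hvv]
      have hvv' : ancestorCode d n ℓ (xn z) = ancestorCode d n ℓ (xn z') := hvv
      have htd : treeDist d n (xn z) (xn z') ≤ min s n := by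
        have := treeDist_le_of_code_eq hℓn hvv'
        omega
      have hqq : q ^ min s n ≤ q ^ treeDist d n (xn z) (xn z') :=
        pow_le_pow_of_le_one hq0.le hq1.le htd
      have hq2 : (1:ℝ) ≤ (q ^ min s n)⁻¹ * q ^ treeDist d n (xn z) (xn z') := by
        rw [← inv_mul_cancel₀ (pow_ne_zero _ hq0.ne' : (q:ℝ) ^ min s n ≠ 0)]
        exact mul_le_mul_of_nonneg_left hqq (by positivity)
      calc b z * b z' * 1 = b z * b z' * 1 := rfl
        _ ≤ b z * b z' * ((q ^ min s n)⁻¹ * q ^ treeDist d n (xn z) (xn z')) :=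
            mul_le_mul_of_nonneg_left hq2 (mul_nonneg (hb z) (hb z'))
        _ = (q ^ min s n)⁻¹ * (b z * b z' * q ^ treeDist d n (xn z) (xn z')) := by ring
    · rw [if_neg hvv, mul_zero]
      exact mul_nonneg (by positivity)
        (mul_nonneg (mul_nonneg (hb z) (hb z')) (by positivity))
  have hcard : ((W.card : ℕ) : ℝ) = 5 ^ d := by
    rw [hW, s10_card_piIcc d 2 (by norm_num)]
    rw [show ((2:ℤ) * 2 + 1).toNat = 5 from rfl]
    norm_num
  calc ∑ z, ∑ z', b z * b z' *
        (if zdist (xm z + xn z) (xm z' + xn z') ≤ 2 ^ s then (1:ℝ) else 0)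
      ≤ ∑ w ∈ W, ∑ z, ∑ z', b z * b z' * (if vc z' = vc z + w then (1:ℝ) else 0) := hsum1
    _ ≤ ∑ _w ∈ W, (q ^ min s n)⁻¹ *
          ∑ z, ∑ z', b z * b z' * q ^ treeDist d n (xn z) (xn z') :=
        Finset.sum_le_sum fun w hw => le_trans (hcorr w hw) hdiag
    _ = (W.card : ℝ) * ((q ^ min s n)⁻¹ *
          ∑ z, ∑ z', b z * b z' * q ^ treeDist d n (xn z) (xn z')) := by
        rw [Finset.sum_const, nsmul_eq_mul]
    _ = 5 ^ d * ((q ^ min s n)⁻¹ *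
          ∑ z, ∑ z', b z * b z' * q ^ treeDist d n (xn z) (xn z')) := by
        rw [hcard]

lemma s10_low_bound {d m n : ℕ} (hm : 1 ≤ m) (hmn : m ≤ n)
    {p q : ℝ} (hp0 : 0 < p) (hp1 : p < 1) (hq0 : 0 < q) (hq1 : q < 1)
    (b : I → ℝ) (hb : ∀ z, 0 ≤ b z) (xm xn : I → Zd d)
    (hxm : ∀ z i, 0 ≤ xm z i + 2 ^ (m - 1) ∧ xm z i + 2 ^ (m - 1) < 2 ^ m)
    (hxn : ∀ z i, 0 ≤ xn z i + 2 ^ (n - 1) ∧ xn z i + 2 ^ (n - 1) < 2 ^ n) :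
    ∑ s ∈ Finset.range m, (2 ^ d * p * q) ^ s *
        (∑ z, ∑ z', b z * b z' *
          (if zdist (xm z + xn z) (xm z' + xn z') ≤ 2 ^ s then (1:ℝ) else 0))
      ≤ 7 ^ d * ((1 - p * q)⁻¹ * ((2:ℝ) ^ (d * m) *
        ∑ z, ∑ z', b z * b z' *
          (p ^ treeDist d m (xm z) (xm z') * q ^ treeDist d n (xn z) (xn z')))) := by
  classical
  have hpq0 : (0:ℝ) ≤ p * q := by positivity
  have hpq1 : p * q < 1 := by nlinarith
  -- step 1: per-scale bound
  have hstep : ∀ s ∈ Finset.range m, (2 ^ d * p * q) ^ s *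
        (∑ z, ∑ z', b z * b z' *
          (if zdist (xm z + xn z) (xm z' + xn z') ≤ 2 ^ s then (1:ℝ) else 0))
      ≤ 7 ^ d * ((2:ℝ) ^ (d * m) * ∑ z, ∑ z', b z * b z' * ((p * q) ^ s *
          (if max (treeDist d m (xm z) (xm z')) (treeDist d n (xn z) (xn z')) ≤ s
            then (1:ℝ) else 0))) := by
    intro s hs
    rw [Finset.mem_range] at hs
    have hsm : s ≤ m := hs.le
    have hsn : s ≤ n := le_trans hsm hmn
    set uc : I → Zd d := fun z => ancestorCode d m (m - s) (xm z) with huc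
    set vc : I → Zd d := fun z => ancestorCode d n (n - s) (xn z) with hvc
    set ψ : I → Zd d := fun z => uc z + vc z with hψ
    set gp : I → Zd d × Zd d := fun z => (uc z, vc z) with hgp
    have hucz : ∀ z i, uc z i = (xm z i + 2 ^ (m - 1)) / 2 ^ s := by
      intro z i
      show (xm z i + 2 ^ (m - 1)) / 2 ^ (m - (m - s)) = _
      rw [show m - (m - s) = s from by omega]
    have hvcz : ∀ z i, vc z i = (xn z i + 2 ^ (n - 1)) / 2 ^ s := by
      intro z i
      show (xn z i + 2 ^ (n - 1)) / 2 ^ (n - (n - s)) = _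
      rw [show n - (n - s) = s from by omega]
    set W : Finset (Zd d) := Fintype.piFinset (fun _ : Fin d => Finset.Icc (-3 : ℤ) 3) with hW
    -- pointwise indicator bound
    have hpt : ∀ z z' : I, (if zdist (xm z + xn z) (xm z' + xn z') ≤ 2 ^ s then (1:ℝ) else 0)
        ≤ ∑ w ∈ W, (if ψ z' = ψ z + w then (1:ℝ) else 0) := by
      intro z z'
      by_cases hD : zdist (xm z + xn z) (xm z' + xn z') ≤ 2 ^ s
      · rw [if_pos hD]
        have hwmem : ψ z' - ψ z ∈ W := by
          rw [hW, Fintype.mem_piFinset]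
          intro i
          rw [Finset.mem_Icc, ← abs_le]
          have happ : (ψ z' - ψ z) i = (uc z' i + vc z' i) - (uc z i + vc z i) := rfl
          rw [happ, hucz, hucz, hvcz, hvcz]
          have hu : (0:ℤ) < 2 ^ s := by positivity
          have h1 := ediv_add_ediv_le (xm z i + 2 ^ (m - 1)) (xn z i + 2 ^ (n - 1)) hu
          have h2 := ediv_add_ediv_le (xm z' i + 2 ^ (m - 1)) (xn z' i + 2 ^ (n - 1)) hu
          have hcoordX : |(xm z + xn z) i - (xm z' + xn z') i| ≤ 2 ^ s :=
            s10_coord_int i hD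
          have hXapp : (xm z + xn z) i = xm z i + xn z i := rfl
          have hXapp' : (xm z' + xn z') i = xm z' i + xn z' i := rfl
          rw [hXapp, hXapp'] at hcoordX
          have h3 : |((xm z' i + 2 ^ (m - 1)) + (xn z' i + 2 ^ (n - 1))) / 2 ^ s
              - ((xm z i + 2 ^ (m - 1)) + (xn z i + 2 ^ (n - 1))) / 2 ^ s| ≤ 1 := by
            apply abs_ediv_sub hu
            rw [one_mul]
            calc |((xm z' i + 2 ^ (m - 1)) + (xn z' i + 2 ^ (n - 1)))
                - ((xm z i + 2 ^ (m - 1)) + (xn z i + 2 ^ (n - 1)))|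
                = |(xm z i + xn z i) - (xm z' i + xn z' i)| := by
                  rw [← abs_neg]
                  congr 1
                  ring
              _ ≤ 2 ^ s := hcoordX
          rw [abs_le] at h3 ⊢
          omega
        calc (1:ℝ) = (if ψ z' = ψ z + (ψ z' - ψ z) then (1:ℝ) else 0) := by
              rw [if_pos (by abel)]
          _ ≤ ∑ w ∈ W, (if ψ z' = ψ z + w then (1:ℝ) else 0) := by
              apply Finset.single_le_sum (f := fun w => (if ψ z' = ψ z + w then (1:ℝ) else 0))
                (fun w _ => by
                  show (0:ℝ) ≤ if ψ z' = ψ z + w then (1:ℝ) else 0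
                  split <;> norm_num) hwmem
      · rw [if_neg hD]
        exact Finset.sum_nonneg fun w _ => by
          show (0:ℝ) ≤ if ψ z' = ψ z + w then (1:ℝ) else 0
          split <;> norm_num
    have hsum1 : ∑ z, ∑ z', b z * b z' *
          (if zdist (xm z + xn z) (xm z' + xn z') ≤ 2 ^ s then (1:ℝ) else 0)
        ≤ ∑ w ∈ W, ∑ z, ∑ z', b z * b z' * (if ψ z' = ψ z + w then (1:ℝ) else 0) := by
      have h1 : ∑ z, ∑ z', b z * b z' *
            (if zdist (xm z + xn z) (xm z' + xn z') ≤ 2 ^ s then (1:ℝ) else 0)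
          ≤ ∑ z, ∑ z', ∑ w ∈ W, b z * b z' * (if ψ z' = ψ z + w then (1:ℝ) else 0) := by
        refine Finset.sum_le_sum fun z _ => Finset.sum_le_sum fun z' _ => ?_
        rw [← Finset.mul_sum]
        exact mul_le_mul_of_nonneg_left (hpt z z') (mul_nonneg (hb z) (hb z'))
      refine le_trans h1 (le_of_eq ?_)
      calc ∑ z, ∑ z', ∑ w ∈ W, b z * b z' * (if ψ z' = ψ z + w then (1:ℝ) else 0)
          = ∑ z, ∑ w ∈ W, ∑ z', b z * b z' * (if ψ z' = ψ z + w then (1:ℝ) else 0) :=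
            Finset.sum_congr rfl fun z _ => Finset.sum_comm
        _ = ∑ w ∈ W, ∑ z, ∑ z', b z * b z' * (if ψ z' = ψ z + w then (1:ℝ) else 0) :=
            Finset.sum_comm
    have hcorr : ∀ w ∈ W, ∑ z, ∑ z', b z * b z' * (if ψ z' = ψ z + w then (1:ℝ) else 0)
        ≤ ∑ z, ∑ z', b z * b z' * (if ψ z = ψ z' then (1:ℝ) else 0) :=
      fun w _ => corr_le b hb ψ (fun C => C + w) (add_left_injective w)
    have hcard : ((W.card : ℕ) : ℝ) = 7 ^ d := by
      rw [hW, s10_card_piIcc d 3 (by norm_num)]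
      rw [show ((2:ℤ) * 3 + 1).toNat = 7 from rfl]
      norm_num
    -- refinement: ψ-fibers to gp-fibers
    have hrefine : ∑ z, ∑ z', b z * b z' * (if ψ z = ψ z' then (1:ℝ) else 0)
        ≤ ((2 ^ ((m - s) * d) : ℕ) : ℝ) *
          ∑ z, ∑ z', b z * b z' * (if gp z = gp z' then (1:ℝ) else 0) := by
      apply refine_le b hb ψ gp (fun e => e.1 + e.2) (fun z => rfl)
      intro C
      set UF : Finset (Zd d) := Fintype.piFinset (fun _ : Fin d => Finset.Ico (0:ℤ) (2 ^ (m - s)))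
        with hUF
      have hcardUF : UF.card = 2 ^ ((m - s) * d) := by
        rw [hUF, Fintype.card_piFinset]
        have h1 : ∀ i : Fin d, (Finset.Ico (0:ℤ) (2 ^ (m - s))).card = 2 ^ (m - s) := by
          intro i
          rw [Int.card_Ico, sub_zero, show ((2:ℤ) ^ (m - s)) = ((2 ^ (m - s) : ℕ) : ℤ) from by
            push_cast; ring, Int.toNat_natCast]
        rw [Finset.prod_congr rfl (fun i _ => h1 i), Finset.prod_const, Finset.card_univ,
          Fintype.card_fin, ← pow_mul]
      rw [← hcardUF]
      apply Finset.card_le_card_of_injOn Prod.fst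
      · intro e he
        rw [Finset.mem_coe, Finset.mem_filter, Finset.mem_image] at he
        obtain ⟨⟨z, _, rfl⟩, _⟩ := he
        rw [Finset.mem_coe, hUF, Fintype.mem_piFinset]
        intro i
        rw [Finset.mem_Ico]
        show 0 ≤ uc z i ∧ uc z i < 2 ^ (m - s)
        rw [hucz]
        exact s10_ediv_nonneg_lt (hxm z i).1 (hxm z i).2 hsm
      · intro e he e' he' hfst
        have hC : e.1 + e.2 = C := by
          simp only [Finset.coe_filter, Set.mem_setOf_eq] at he
          exact he.2
        have hC' : e'.1 + e'.2 = C := by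
          simp only [Finset.coe_filter, Set.mem_setOf_eq] at he'
          exact he'.2
        have h2 : e.2 = e'.2 := by
          have h3 : e.1 + e.2 = e'.1 + e'.2 := by rw [hC, hC']
          rw [hfst] at h3
          exact add_left_cancel h3
        exact Prod.ext hfst h2
    -- gp-equality implies small tree distances
    have hgpt : ∑ z, ∑ z', b z * b z' * (if gp z = gp z' then (1:ℝ) else 0)
        ≤ ∑ z, ∑ z', b z * b z' *
          (if max (treeDist d m (xm z) (xm z')) (treeDist d n (xn z) (xn z')) ≤ s
            then (1:ℝ) else 0) := by
      refine Finset.sum_le_sum fun z _ => Finset.sum_le_sum fun z' _ => ?_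
      apply mul_le_mul_of_nonneg_left _ (mul_nonneg (hb z) (hb z'))
      by_cases hgg : gp z = gp z'
      · rw [if_pos hgg]
        have h1 : ancestorCode d m (m - s) (xm z) = ancestorCode d m (m - s) (xm z') :=
          congrArg Prod.fst hgg
        have h2 : ancestorCode d n (n - s) (xn z) = ancestorCode d n (n - s) (xn z') :=
          congrArg Prod.snd hgg
        have ht1 : treeDist d m (xm z) (xm z') ≤ s := by
          have := treeDist_le_of_code_eq (by omega : m - s ≤ m) h1
          omega
        have ht2 : treeDist d n (xn z) (xn z') ≤ s := by
          have := treeDist_le_of_code_eq (by omega : n - s ≤ n) h2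
          omega
        rw [if_pos (by omega : max (treeDist d m (xm z) (xm z')) (treeDist d n (xn z) (xn z')) ≤ s)]
      · rw [if_neg hgg]
        split <;> norm_num
    -- put the scalar factors together
    have hNid : (2 ^ d * p * q) ^ s * ((2 ^ ((m - s) * d) : ℕ) : ℝ)
        = (2:ℝ) ^ (d * m) * (p * q) ^ s := by
      push_cast
      rw [mul_assoc, mul_pow, ← pow_mul]
      rw [show d * m = d * s + (m - s) * d from by
        rw [mul_comm (m - s) d, ← Nat.left_distrib, Nat.add_sub_cancel' hsm], pow_add]
      ring
    -- assemble the per-scale bound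
    have hdiagle : ∑ z, ∑ z', b z * b z' * (if ψ z = ψ z' then (1:ℝ) else 0)
        ≤ ((2 ^ ((m - s) * d) : ℕ) : ℝ) * ∑ z, ∑ z', b z * b z' *
            (if max (treeDist d m (xm z) (xm z')) (treeDist d n (xn z) (xn z')) ≤ s
              then (1:ℝ) else 0) :=
      le_trans hrefine (mul_le_mul_of_nonneg_left hgpt (by positivity))
    have hPbound : ∑ z, ∑ z', b z * b z' *
          (if zdist (xm z + xn z) (xm z' + xn z') ≤ 2 ^ s then (1:ℝ) else 0)
        ≤ 7 ^ d * (((2 ^ ((m - s) * d) : ℕ) : ℝ) * ∑ z, ∑ z', b z * b z' *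
            (if max (treeDist d m (xm z) (xm z')) (treeDist d n (xn z) (xn z')) ≤ s
              then (1:ℝ) else 0)) := by
      calc ∑ z, ∑ z', b z * b z' *
            (if zdist (xm z + xn z) (xm z' + xn z') ≤ 2 ^ s then (1:ℝ) else 0)
          ≤ ∑ w ∈ W, ∑ z, ∑ z', b z * b z' * (if ψ z' = ψ z + w then (1:ℝ) else 0) := hsum1
        _ ≤ ∑ _w ∈ W, ((2 ^ ((m - s) * d) : ℕ) : ℝ) * ∑ z, ∑ z', b z * b z' *
              (if max (treeDist d m (xm z) (xm z')) (treeDist d n (xn z) (xn z')) ≤ s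
                then (1:ℝ) else 0) :=
            Finset.sum_le_sum fun w hw => le_trans (hcorr w hw) hdiagle
        _ = ((W.card : ℕ) : ℝ) * (((2 ^ ((m - s) * d) : ℕ) : ℝ) * ∑ z, ∑ z', b z * b z' *
              (if max (treeDist d m (xm z) (xm z')) (treeDist d n (xn z) (xn z')) ≤ s
                then (1:ℝ) else 0)) := by
            rw [Finset.sum_const, nsmul_eq_mul]
        _ = 7 ^ d * (((2 ^ ((m - s) * d) : ℕ) : ℝ) * ∑ z, ∑ z', b z * b z' *
              (if max (treeDist d m (xm z) (xm z')) (treeDist d n (xn z) (xn z')) ≤ s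
                then (1:ℝ) else 0)) := by rw [hcard]
    have hpull : (p * q) ^ s * (∑ z, ∑ z', b z * b z' *
          (if max (treeDist d m (xm z) (xm z')) (treeDist d n (xn z) (xn z')) ≤ s
            then (1:ℝ) else 0))
        = ∑ z, ∑ z', b z * b z' * ((p * q) ^ s *
          (if max (treeDist d m (xm z) (xm z')) (treeDist d n (xn z) (xn z')) ≤ s
            then (1:ℝ) else 0)) := by
      rw [Finset.mul_sum]
      refine Finset.sum_congr rfl fun z _ => ?_
      rw [Finset.mul_sum]
      exact Finset.sum_congr rfl fun z' _ => by ring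
    calc (2 ^ d * p * q) ^ s * (∑ z, ∑ z', b z * b z' *
          (if zdist (xm z + xn z) (xm z' + xn z') ≤ 2 ^ s then (1:ℝ) else 0))
        ≤ (2 ^ d * p * q) ^ s * (7 ^ d * (((2 ^ ((m - s) * d) : ℕ) : ℝ) *
            ∑ z, ∑ z', b z * b z' *
              (if max (treeDist d m (xm z) (xm z')) (treeDist d n (xn z) (xn z')) ≤ s
                then (1:ℝ) else 0))) :=
          mul_le_mul_of_nonneg_left hPbound (by positivity)
      _ = 7 ^ d * (((2 ^ d * p * q) ^ s * ((2 ^ ((m - s) * d) : ℕ) : ℝ)) *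
            ∑ z, ∑ z', b z * b z' *
              (if max (treeDist d m (xm z) (xm z')) (treeDist d n (xn z) (xn z')) ≤ s
                then (1:ℝ) else 0)) := by ring
      _ = 7 ^ d * (((2:ℝ) ^ (d * m) * (p * q) ^ s) *
            ∑ z, ∑ z', b z * b z' *
              (if max (treeDist d m (xm z) (xm z')) (treeDist d n (xn z) (xn z')) ≤ s
                then (1:ℝ) else 0)) := by rw [hNid]
      _ = 7 ^ d * ((2:ℝ) ^ (d * m) * ((p * q) ^ s *
            ∑ z, ∑ z', b z * b z' *
              (if max (treeDist d m (xm z) (xm z')) (treeDist d n (xn z) (xn z')) ≤ s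
                then (1:ℝ) else 0))) := by ring
      _ = 7 ^ d * ((2:ℝ) ^ (d * m) * ∑ z, ∑ z', b z * b z' * ((p * q) ^ s *
              (if max (treeDist d m (xm z) (xm z')) (treeDist d n (xn z) (xn z')) ≤ s
                then (1:ℝ) else 0))) := by rw [hpull]
  -- total: sum over scales and swap
  calc ∑ s ∈ Finset.range m, (2 ^ d * p * q) ^ s *
        (∑ z, ∑ z', b z * b z' *
          (if zdist (xm z + xn z) (xm z' + xn z') ≤ 2 ^ s then (1:ℝ) else 0))
      ≤ ∑ s ∈ Finset.range m, 7 ^ d * ((2:ℝ) ^ (d * m) * ∑ z, ∑ z', b z * b z' * ((p * q) ^ s *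
          (if max (treeDist d m (xm z) (xm z')) (treeDist d n (xn z) (xn z')) ≤ s
            then (1:ℝ) else 0))) := Finset.sum_le_sum hstep
    _ = 7 ^ d * ((2:ℝ) ^ (d * m) * ∑ s ∈ Finset.range m, ∑ z, ∑ z', b z * b z' * ((p * q) ^ s *
          (if max (treeDist d m (xm z) (xm z')) (treeDist d n (xn z) (xn z')) ≤ s
            then (1:ℝ) else 0))) := by
        rw [← Finset.mul_sum, ← Finset.mul_sum]
    _ = 7 ^ d * ((2:ℝ) ^ (d * m) * ∑ z, ∑ z', ∑ s ∈ Finset.range m,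
          b z * b z' * ((p * q) ^ s *
          (if max (treeDist d m (xm z) (xm z')) (treeDist d n (xn z) (xn z')) ≤ s
            then (1:ℝ) else 0))) := by
        congr 2
        calc ∑ s ∈ Finset.range m, ∑ z, ∑ z', b z * b z' * ((p * q) ^ s *
              (if max (treeDist d m (xm z) (xm z')) (treeDist d n (xn z) (xn z')) ≤ s
                then (1:ℝ) else 0))
            = ∑ z, ∑ s ∈ Finset.range m, ∑ z', b z * b z' * ((p * q) ^ s *
              (if max (treeDist d m (xm z) (xm z')) (treeDist d n (xn z) (xn z')) ≤ s
                then (1:ℝ) else 0)) := Finset.sum_comm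
          _ = ∑ z, ∑ z', ∑ s ∈ Finset.range m, b z * b z' * ((p * q) ^ s *
              (if max (treeDist d m (xm z) (xm z')) (treeDist d n (xn z) (xn z')) ≤ s
                then (1:ℝ) else 0)) := Finset.sum_congr rfl fun z _ => Finset.sum_comm
    _ ≤ 7 ^ d * ((2:ℝ) ^ (d * m) * ∑ z, ∑ z',
          (1 - p * q)⁻¹ * (b z * b z' *
            (p ^ treeDist d m (xm z) (xm z') * q ^ treeDist d n (xn z) (xn z')))) := by
        apply mul_le_mul_of_nonneg_left _ (by positivity)
        apply mul_le_mul_of_nonneg_left _ (by positivity)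
        refine Finset.sum_le_sum fun z _ => Finset.sum_le_sum fun z' _ => ?_
        have hplug : ∑ s ∈ Finset.range m, b z * b z' * ((p * q) ^ s *
              (if max (treeDist d m (xm z) (xm z')) (treeDist d n (xn z) (xn z')) ≤ s
                then (1:ℝ) else 0))
            = b z * b z' * ∑ s ∈ Finset.range m, (p * q) ^ s *
              (if max (treeDist d m (xm z) (xm z')) (treeDist d n (xn z) (xn z')) ≤ s
                then (1:ℝ) else 0) := by
          rw [Finset.mul_sum]
        rw [hplug]
        have hgeo := s10_geom_tail hpq0 hpq1 m
          (max (treeDist d m (xm z) (xm z')) (treeDist d n (xn z) (xn z')))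
        have hσ : (p * q) ^ max (treeDist d m (xm z) (xm z')) (treeDist d n (xn z) (xn z'))
            ≤ p ^ treeDist d m (xm z) (xm z') * q ^ treeDist d n (xn z) (xn z') := by
          rw [mul_pow]
          exact mul_le_mul
            (pow_le_pow_of_le_one hp0.le hp1.le (le_max_left _ _))
            (pow_le_pow_of_le_one hq0.le hq1.le (le_max_right _ _))
            (by positivity) (by positivity)
        calc b z * b z' * ∑ s ∈ Finset.range m, (p * q) ^ s *
              (if max (treeDist d m (xm z) (xm z')) (treeDist d n (xn z) (xn z')) ≤ s
                then (1:ℝ) else 0)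
            ≤ b z * b z' * ((p * q) ^
                max (treeDist d m (xm z) (xm z')) (treeDist d n (xn z) (xn z'))
                * (1 - p * q)⁻¹) :=
              mul_le_mul_of_nonneg_left hgeo (mul_nonneg (hb z) (hb z'))
          _ ≤ b z * b z' * ((p ^ treeDist d m (xm z) (xm z') *
                q ^ treeDist d n (xn z) (xn z')) * (1 - p * q)⁻¹) := by
              exact mul_le_mul_of_nonneg_left
                (mul_le_mul_of_nonneg_right hσ (inv_nonneg.mpr (by linarith)))
                (mul_nonneg (hb z) (hb z'))
          _ = (1 - p * q)⁻¹ * (b z * b z' *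
                (p ^ treeDist d m (xm z) (xm z') * q ^ treeDist d n (xn z) (xn z'))) := by
              ring
    _ = 7 ^ d * ((1 - p * q)⁻¹ * ((2:ℝ) ^ (d * m) *
          ∑ z, ∑ z', b z * b z' *
            (p ^ treeDist d m (xm z) (xm z') * q ^ treeDist d n (xn z) (xn z')))) := by
        have hout : ∑ z, ∑ z', (1 - p * q)⁻¹ * (b z * b z' *
              (p ^ treeDist d m (xm z) (xm z') * q ^ treeDist d n (xn z) (xn z')))
            = (1 - p * q)⁻¹ * ∑ z, ∑ z', b z * b z' *
              (p ^ treeDist d m (xm z) (xm z') * q ^ treeDist d n (xn z) (xn z')) := by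
          rw [Finset.mul_sum]
          exact Finset.sum_congr rfl fun z _ => by rw [Finset.mul_sum]
        rw [hout]
        ring


lemma s10_zdist_nonneg {d : ℕ} (x y : Zd d) : 0 ≤ zdist x y := Real.sqrt_nonneg _

lemma s10_zdist_le_zdiam {d : ℕ} {A : Set (Zd d)} (hA : A.Finite) {x y : Zd d}
    (hx : x ∈ A) (hy : y ∈ A) : zdist x y ≤ zdiam A := by
  unfold zdiam
  apply le_csSup
  · have h1 : {r : ℝ | ∃ a ∈ A, ∃ b ∈ A, r = zdist a b}
        ⊆ (fun pq : Zd d × Zd d => zdist pq.1 pq.2) '' (A ×ˢ A) := by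
      rintro r ⟨a, ha, b, hb, rfl⟩
      exact ⟨(a, b), Set.mk_mem_prod ha hb, rfl⟩
    exact (((hA.prod hA).image _).subset h1).bddAbove
  · exact ⟨x, hx, y, hy, rfl⟩

lemma s10_pull {I : Type*} [Fintype I] (c : ℝ) (f : I → I → ℝ) :
    ∑ z, ∑ z', c * f z z' = c * ∑ z, ∑ z', f z z' := by
  rw [Finset.mul_sum]
  exact Finset.sum_congr rfl fun z _ => by rw [Finset.mul_sum]

lemma s10_swap {I : Type*} [Fintype I] {S : Finset ℕ} (f : ℕ → I → I → ℝ) :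
    ∑ s ∈ S, ∑ z, ∑ z', f s z z' = ∑ z, ∑ z', ∑ s ∈ S, f s z z' :=
  calc ∑ s ∈ S, ∑ z, ∑ z', f s z z' = ∑ z, ∑ s ∈ S, ∑ z', f s z z' := Finset.sum_comm
    _ = ∑ z, ∑ z', ∑ s ∈ S, f s z z' := Finset.sum_congr rfl fun z _ => Finset.sum_comm

lemma s10_swap4 {N1 N2 : ℕ} (F : Fin N1 → Fin N1 → Fin N2 → Fin N2 → ℝ) :
    ∑ i, ∑ i', ∑ j, ∑ j', F i i' j j'
      = ∑ z : Fin N1 × Fin N2, ∑ z' : Fin N1 × Fin N2, F z.1 z'.1 z.2 z'.2 := by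
  simp only [Fintype.sum_prod_type]
  exact Finset.sum_congr rfl fun i _ => Finset.sum_comm

end S10main


/-- Deterministic comparison between the tree-energy and the Riesz energy
of a family of coefficients `(a_{ij})` supported on pairs of leaves with `i⊕j ∈ A`
(`0`-indexed here; `-β = log₂(2^d p q)`). -/
theorem statement10 (d : ℕ) (hd : 1 ≤ d) (p q : ℝ)
    (hp : p ∈ Set.Ioo (0:ℝ) 1) (hq : q ∈ Set.Ioo (0:ℝ) 1)
    (hpd : ((2:ℝ) ^ d)⁻¹ < p) (hqd : ((2:ℝ) ^ d)⁻¹ < q)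
    (hβ : 0 < -Real.logb 2 (2 ^ d * p * q)) :
    ∃ c : ℝ, 0 < c ∧
      ∀ (m n : ℕ), 1 ≤ m → m ≤ n →
      ∀ A : Set (Zd d), A.Nonempty → A.Finite →
        A ⊆ {x : Zd d | ∀ i, -((2:ℤ) ^ (n-1)) - 2 ^ (m-1) ≤ x i ∧
            x i < (2:ℤ) ^ (n-1) + 2 ^ (m-1)} →
      ∀ a : Fin (2 ^ (d * m)) → Fin (2 ^ (d * n)) → ℝ,
        (∀ i j, 0 ≤ a i j) →
        (∀ (i : Fin (2 ^ (d * m))) (j : Fin (2 ^ (d * n))), leafOfIdx d m (i : ℕ) + leafOfIdx d n (j : ℕ) ∉ A → a i j = 0) →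
        (∑ i, ∑ j, a i j) = 1 →
        c * p ^ m *
            (∑ i, ∑ i', ∑ j, ∑ j', a i j * a i' j' *
              (max (zdist (leafOfIdx d m (i : ℕ) + leafOfIdx d n (j : ℕ))
                  (leafOfIdx d m (i' : ℕ) + leafOfIdx d n (j' : ℕ))) 1) ^
                Real.logb 2 (2 ^ d * p * q)) ≤
          (2 ^ d * p) ^ max (Real.logb 2 (max (zdiam A) 1)) (m : ℝ) *
            (∑ i, ∑ i', ∑ j, ∑ j', a i j * a i' j' *
              p ^ treeDist d m (leafOfIdx d m (i : ℕ)) (leafOfIdx d m (i' : ℕ)) *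
              q ^ treeDist d n (leafOfIdx d n (j : ℕ)) (leafOfIdx d n (j' : ℕ))) := by
  classical
  obtain ⟨hp0, hp1⟩ := hp
  obtain ⟨hq0, hq1⟩ := hq
  have h2d0 : (0:ℝ) < 2 ^ d := by positivity
  have hr1 : (1:ℝ) < 2 ^ d * p := by
    have h := mul_lt_mul_of_pos_left hpd h2d0
    rwa [mul_inv_cancel₀ h2d0.ne'] at h
  have hx0 : (0:ℝ) < 2 ^ d * p * q := by positivity
  have hx1 : 2 ^ d * p * q < 1 := by
    by_contra hcon
    push_neg at hcon
    have := Real.logb_nonneg (by norm_num : (1:ℝ) < 2) hcon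
    linarith
  have hpq1 : p * q < 1 := by nlinarith
  have hC1 : (0:ℝ) < (1 - p * q)⁻¹ := inv_pos.mpr (by nlinarith)
  have hC2 : (0:ℝ) < 2 ^ d * p * (2 ^ d * p - 1)⁻¹ :=
    mul_pos (by linarith) (inv_pos.mpr (by linarith))
  have hK0 : (0:ℝ) < 7 ^ d * (1 - p * q)⁻¹ + 5 ^ d * (2 ^ d * p * (2 ^ d * p - 1)⁻¹) * 2 ^ d := by
    have h1 : (0:ℝ) < 7 ^ d * (1 - p * q)⁻¹ := mul_pos (by positivity) hC1
    have h2 : (0:ℝ) < 5 ^ d * (2 ^ d * p * (2 ^ d * p - 1)⁻¹) * 2 ^ d :=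
      mul_pos (mul_pos (by positivity) hC2) h2d0
    linarith
  refine ⟨(2 ^ d * p * q) *
    (7 ^ d * (1 - p * q)⁻¹ + 5 ^ d * (2 ^ d * p * (2 ^ d * p - 1)⁻¹) * 2 ^ d)⁻¹,
    mul_pos hx0 (inv_pos.mpr hK0), ?_⟩
  intro m n hm hmn A hAne hAfin hAsub a ha0 hsupp _hsum1
  have hcpos : (0:ℝ) < (2 ^ d * p * q) *
      (7 ^ d * (1 - p * q)⁻¹ + 5 ^ d * (2 ^ d * p * (2 ^ d * p - 1)⁻¹) * 2 ^ d)⁻¹ :=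
    mul_pos hx0 (inv_pos.mpr hK0)
  -- top scale
  have hDA1 : (1:ℝ) ≤ max (zdiam A) 1 := le_max_right _ _
  have hlogb0 : 0 ≤ Real.logb 2 (max (zdiam A) 1) := Real.logb_nonneg (by norm_num) hDA1
  set T : ℕ := max m ⌈Real.logb 2 (max (zdiam A) 1)⌉₊ with hTdef
  have hmT : m ≤ T := le_max_left _ _
  have h2T : max (zdiam A) 1 ≤ 2 ^ T := by
    calc max (zdiam A) 1 = (2:ℝ) ^ Real.logb 2 (max (zdiam A) 1) :=
        (Real.rpow_logb (by norm_num) (by norm_num) (by linarith)).symm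
      _ ≤ (2:ℝ) ^ ((T : ℕ) : ℝ) := by
          apply Real.rpow_le_rpow_of_exponent_le (by norm_num)
          calc Real.logb 2 (max (zdiam A) 1) ≤ (⌈Real.logb 2 (max (zdiam A) 1)⌉₊ : ℝ) :=
              Nat.le_ceil _
            _ ≤ ((T : ℕ) : ℝ) := by
                exact_mod_cast Nat.cast_le.mpr (le_max_right m _)
      _ = 2 ^ T := Real.rpow_natCast 2 T
  have hTM : ((T : ℕ) : ℝ) ≤ max (Real.logb 2 (max (zdiam A) 1)) (m : ℝ) + 1 := by
    rw [hTdef, Nat.cast_max]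
    apply max_le
    · have h1 : (m:ℝ) ≤ max (Real.logb 2 (max (zdiam A) 1)) (m : ℝ) := le_max_right _ _
      linarith
    · have h1 : (⌈Real.logb 2 (max (zdiam A) 1)⌉₊ : ℝ) < Real.logb 2 (max (zdiam A) 1) + 1 :=
        Nat.ceil_lt_add_one hlogb0
      have h2 : Real.logb 2 (max (zdiam A) 1) ≤ max (Real.logb 2 (max (zdiam A) 1)) (m : ℝ) :=
        le_max_left _ _
      linarith
  -- reshape the goal to sums over pairs
  rw [s10_swap4 (fun i i' j j' => a i j * a i' j' *
      max (zdist (leafOfIdx d m (i : ℕ) + leafOfIdx d n (j : ℕ))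
        (leafOfIdx d m (i' : ℕ) + leafOfIdx d n (j' : ℕ))) 1 ^
        Real.logb 2 (2 ^ d * p * q)),
    s10_swap4 (fun i i' j j' => a i j * a i' j' *
      p ^ treeDist d m (leafOfIdx d m (i : ℕ)) (leafOfIdx d m (i' : ℕ)) *
      q ^ treeDist d n (leafOfIdx d n (j : ℕ)) (leafOfIdx d n (j' : ℕ)))]
  -- pair-level data
  set b : Fin (2 ^ (d * m)) × Fin (2 ^ (d * n)) → ℝ := fun z => a z.1 z.2 with hbdef
  set xm : Fin (2 ^ (d * m)) × Fin (2 ^ (d * n)) → Zd d :=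
    fun z => leafOfIdx d m ((z.1 : ℕ)) with hxmdef
  set xn : Fin (2 ^ (d * m)) × Fin (2 ^ (d * n)) → Zd d :=
    fun z => leafOfIdx d n ((z.2 : ℕ)) with hxndef
  have hb0 : ∀ z, 0 ≤ b z := fun z => ha0 z.1 z.2
  have hxmB : ∀ z i, 0 ≤ xm z i + 2 ^ (m - 1) ∧ xm z i + 2 ^ (m - 1) < 2 ^ m :=
    fun z i => leaf_coord d m _ i
  have hxnB : ∀ z i, 0 ≤ xn z i + 2 ^ (n - 1) ∧ xn z i + 2 ^ (n - 1) < 2 ^ n :=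
    fun z i => leaf_coord d n _ i
  have hXA : ∀ z, b z ≠ 0 → xm z + xn z ∈ A := by
    intro z hz
    by_contra hno
    have h := hsupp z.1 z.2 hno
    exact hz h
  have hE0 : 0 ≤ ∑ z, ∑ z', b z * b z' *
      (p ^ treeDist d m (xm z) (xm z') * q ^ treeDist d n (xn z) (xn z')) :=
    Finset.sum_nonneg fun z _ => Finset.sum_nonneg fun z' _ =>
      mul_nonneg (mul_nonneg (hb0 z) (hb0 z')) (by positivity)
  have hE20 : 0 ≤ ∑ z, ∑ z', b z * b z' * q ^ treeDist d n (xn z) (xn z') :=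
    Finset.sum_nonneg fun z _ => Finset.sum_nonneg fun z' _ =>
      mul_nonneg (mul_nonneg (hb0 z) (hb0 z')) (by positivity)
  -- Riesz decomposition over scales
  have hpt : ∀ z z' : Fin (2 ^ (d * m)) × Fin (2 ^ (d * n)),
      b z * b z' * max (zdist (xm z + xn z) (xm z' + xn z')) 1 ^ Real.logb 2 (2 ^ d * p * q)
      ≤ b z * b z' * ((2 ^ d * p * q)⁻¹ * ∑ s ∈ Finset.range (T + 1), (2 ^ d * p * q) ^ s *
          (if zdist (xm z + xn z) (xm z' + xn z') ≤ 2 ^ s then (1:ℝ) else 0)) := by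
    intro z z'
    by_cases hzz : b z * b z' = 0
    · rw [hzz, zero_mul, zero_mul]
    · obtain ⟨hz1, hz2⟩ := mul_ne_zero_iff.mp hzz
      have hdle : zdist (xm z + xn z) (xm z' + xn z') ≤ 2 ^ T := by
        calc zdist (xm z + xn z) (xm z' + xn z') ≤ zdiam A :=
            s10_zdist_le_zdiam hAfin (hXA z hz1) (hXA z' hz2)
          _ ≤ max (zdiam A) 1 := le_max_left _ _
          _ ≤ 2 ^ T := h2T
      exact mul_le_mul_of_nonneg_left
        (s10_riesz_decomp hx0 hx1 (s10_zdist_nonneg _ _) T hdle)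
        (mul_nonneg (hb0 z) (hb0 z'))
  have hR1 : (∑ z, ∑ z', b z * b z' *
        max (zdist (xm z + xn z) (xm z' + xn z')) 1 ^ Real.logb 2 (2 ^ d * p * q))
      ≤ (2 ^ d * p * q)⁻¹ * ∑ s ∈ Finset.range (T + 1), (2 ^ d * p * q) ^ s *
          (∑ z, ∑ z', b z * b z' *
            (if zdist (xm z + xn z) (xm z' + xn z') ≤ 2 ^ s then (1:ℝ) else 0)) := by
    calc (∑ z, ∑ z', b z * b z' *
          max (zdist (xm z + xn z) (xm z' + xn z')) 1 ^ Real.logb 2 (2 ^ d * p * q))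
        ≤ ∑ z, ∑ z', b z * b z' * ((2 ^ d * p * q)⁻¹ *
            ∑ s ∈ Finset.range (T + 1), (2 ^ d * p * q) ^ s *
            (if zdist (xm z + xn z) (xm z' + xn z') ≤ 2 ^ s then (1:ℝ) else 0)) :=
          Finset.sum_le_sum fun z _ => Finset.sum_le_sum fun z' _ => hpt z z'
      _ = ∑ z, ∑ z', ∑ s ∈ Finset.range (T + 1), (2 ^ d * p * q)⁻¹ * ((2 ^ d * p * q) ^ s *
            (b z * b z' *
            (if zdist (xm z + xn z) (xm z' + xn z') ≤ 2 ^ s then (1:ℝ) else 0))) := by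
          refine Finset.sum_congr rfl fun z _ => Finset.sum_congr rfl fun z' _ => ?_
          rw [Finset.mul_sum, Finset.mul_sum]
          exact Finset.sum_congr rfl fun s _ => by ring
      _ = ∑ s ∈ Finset.range (T + 1), ∑ z, ∑ z', (2 ^ d * p * q)⁻¹ * ((2 ^ d * p * q) ^ s *
            (b z * b z' *
            (if zdist (xm z + xn z) (xm z' + xn z') ≤ 2 ^ s then (1:ℝ) else 0))) :=
          (s10_swap _).symm
      _ = (2 ^ d * p * q)⁻¹ * ∑ s ∈ Finset.range (T + 1), (2 ^ d * p * q) ^ s *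
            (∑ z, ∑ z', b z * b z' *
            (if zdist (xm z + xn z) (xm z' + xn z') ≤ 2 ^ s then (1:ℝ) else 0)) := by
          rw [Finset.mul_sum]
          refine Finset.sum_congr rfl fun s _ => ?_
          rw [s10_pull ((2 ^ d * p * q)⁻¹), s10_pull ((2 ^ d * p * q) ^ s)]
  -- split the scales
  have hsplit : ∑ s ∈ Finset.range (T + 1), (2 ^ d * p * q) ^ s *
        (∑ z, ∑ z', b z * b z' *
          (if zdist (xm z + xn z) (xm z' + xn z') ≤ 2 ^ s then (1:ℝ) else 0))
      = (∑ s ∈ Finset.range m, (2 ^ d * p * q) ^ s *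
          (∑ z, ∑ z', b z * b z' *
            (if zdist (xm z + xn z) (xm z' + xn z') ≤ 2 ^ s then (1:ℝ) else 0)))
        + ∑ s ∈ Finset.Ico m (T + 1), (2 ^ d * p * q) ^ s *
          (∑ z, ∑ z', b z * b z' *
            (if zdist (xm z + xn z) (xm z' + xn z') ≤ 2 ^ s then (1:ℝ) else 0)) := by
    simp only [Finset.range_eq_Ico]
    exact (Finset.sum_Ico_consecutive _ (Nat.zero_le m) (by omega : m ≤ T + 1)).symm
  -- low scales
  have hLOW := s10_low_bound hm hmn hp0 hp1 hq0 hq1 b hb0 xm xn hxmB hxnB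
  -- mid scales
  have hsc : ∀ s : ℕ, (2 ^ d * p * q) ^ s * (q ^ min s n)⁻¹ ≤ (2 ^ d * p) ^ s := by
    intro s
    have h1 : q ^ s = q ^ min s n * q ^ (s - min s n) := by
      rw [← pow_add, Nat.add_sub_cancel' (min_le_left s n)]
    calc (2 ^ d * p * q) ^ s * (q ^ min s n)⁻¹
        = ((2 ^ d * p) ^ s * q ^ s) * (q ^ min s n)⁻¹ := by rw [mul_pow]
      _ = (2 ^ d * p) ^ s * q ^ (s - min s n) * (q ^ min s n * (q ^ min s n)⁻¹) := by
          rw [h1]; ring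
      _ = (2 ^ d * p) ^ s * q ^ (s - min s n) := by
          rw [mul_inv_cancel₀ (pow_ne_zero _ hq0.ne'), mul_one]
      _ ≤ (2 ^ d * p) ^ s * 1 :=
          mul_le_mul_of_nonneg_left (pow_le_one₀ hq0.le hq1.le)
            (pow_nonneg (by positivity) s)
      _ = (2 ^ d * p) ^ s := mul_one _
  have hMID : ∑ s ∈ Finset.Ico m (T + 1), (2 ^ d * p * q) ^ s *
        (∑ z, ∑ z', b z * b z' *
          (if zdist (xm z + xn z) (xm z' + xn z') ≤ 2 ^ s then (1:ℝ) else 0))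
      ≤ ((2 ^ d * p) ^ T * (2 ^ d * p * (2 ^ d * p - 1)⁻¹)) *
          (5 ^ d * ∑ z, ∑ z', b z * b z' * q ^ treeDist d n (xn z) (xn z')) := by
    calc ∑ s ∈ Finset.Ico m (T + 1), (2 ^ d * p * q) ^ s *
          (∑ z, ∑ z', b z * b z' *
            (if zdist (xm z + xn z) (xm z' + xn z') ≤ 2 ^ s then (1:ℝ) else 0))
        ≤ ∑ s ∈ Finset.Ico m (T + 1), (2 ^ d * p * q) ^ s *
            (5 ^ d * ((q ^ min s n)⁻¹ *
              ∑ z, ∑ z', b z * b z' * q ^ treeDist d n (xn z) (xn z'))) := by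
          refine Finset.sum_le_sum fun s hs => ?_
          refine mul_le_mul_of_nonneg_left ?_ (pow_nonneg hx0.le s)
          exact s10_mid_bound hmn (Finset.mem_Ico.mp hs).1 hq0 hq1 b hb0 xm xn hxmB hxnB
      _ = ∑ s ∈ Finset.Ico m (T + 1), ((2 ^ d * p * q) ^ s * (q ^ min s n)⁻¹) *
            (5 ^ d * ∑ z, ∑ z', b z * b z' * q ^ treeDist d n (xn z) (xn z')) :=
          Finset.sum_congr rfl fun s _ => by ring
      _ ≤ ∑ s ∈ Finset.Ico m (T + 1), (2 ^ d * p) ^ s *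
            (5 ^ d * ∑ z, ∑ z', b z * b z' * q ^ treeDist d n (xn z) (xn z')) := by
          refine Finset.sum_le_sum fun s _ => ?_
          exact mul_le_mul_of_nonneg_right (hsc s)
            (mul_nonneg (by positivity) hE20)
      _ = (∑ s ∈ Finset.Ico m (T + 1), (2 ^ d * p) ^ s) *
            (5 ^ d * ∑ z, ∑ z', b z * b z' * q ^ treeDist d n (xn z) (xn z')) :=
          (Finset.sum_mul _ _ _).symm
      _ ≤ ((2 ^ d * p) ^ T * (2 ^ d * p * (2 ^ d * p - 1)⁻¹)) *
            (5 ^ d * ∑ z, ∑ z', b z * b z' * q ^ treeDist d n (xn z) (xn z')) := by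
          refine mul_le_mul_of_nonneg_right ?_ (mul_nonneg (by positivity) hE20)
          calc ∑ s ∈ Finset.Ico m (T + 1), (2 ^ d * p) ^ s
              ≤ ∑ s ∈ Finset.range (T + 1), (2 ^ d * p) ^ s := by
                refine Finset.sum_le_sum_of_subset_of_nonneg ?_
                  (fun s _ _ => pow_nonneg (by positivity) s)
                intro s hs
                rw [Finset.mem_Ico] at hs
                rw [Finset.mem_range]
                omega
            _ ≤ (2 ^ d * p) ^ T * (2 ^ d * p * (2 ^ d * p - 1)⁻¹) := s10_geom_le' hr1 T
  -- E₂ ≤ p^{-m} E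
  have hE2E : ∑ z, ∑ z', b z * b z' * q ^ treeDist d n (xn z) (xn z')
      ≤ (p ^ m)⁻¹ * ∑ z, ∑ z', b z * b z' *
          (p ^ treeDist d m (xm z) (xm z') * q ^ treeDist d n (xn z) (xn z')) := by
    rw [Finset.mul_sum]
    refine Finset.sum_le_sum fun z _ => ?_
    rw [Finset.mul_sum]
    refine Finset.sum_le_sum fun z' _ => ?_
    have hpm : p ^ m ≤ p ^ treeDist d m (xm z) (xm z') :=
      pow_le_pow_of_le_one hp0.le hp1.le (treeDist_le d m _ _)
    calc b z * b z' * q ^ treeDist d n (xn z) (xn z')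
        = (p ^ m * (p ^ m)⁻¹) * (b z * b z' * q ^ treeDist d n (xn z) (xn z')) := by
          rw [mul_inv_cancel₀ (pow_ne_zero m hp0.ne'), one_mul]
      _ = (p ^ m)⁻¹ * (b z * b z' * (p ^ m * q ^ treeDist d n (xn z) (xn z'))) := by ring
      _ ≤ (p ^ m)⁻¹ * (b z * b z' *
            (p ^ treeDist d m (xm z) (xm z') * q ^ treeDist d n (xn z) (xn z'))) := by
          apply mul_le_mul_of_nonneg_left _ (inv_nonneg.mpr (pow_nonneg hp0.le m))
          apply mul_le_mul_of_nonneg_left _ (mul_nonneg (hb0 z) (hb0 z'))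
          exact mul_le_mul_of_nonneg_right hpm (pow_nonneg hq0.le _)
  -- rpow comparisons
  have hrm : (2 ^ d * p) ^ m ≤ (2 ^ d * p) ^ max (Real.logb 2 (max (zdiam A) 1)) (m : ℝ) := by
    rw [← Real.rpow_natCast (2 ^ d * p) m]
    exact Real.rpow_le_rpow_of_exponent_le hr1.le (le_max_right _ _)
  have hrT : (2 ^ d * p) ^ T
      ≤ 2 ^ d * (2 ^ d * p) ^ max (Real.logb 2 (max (zdiam A) 1)) (m : ℝ) := by
    rw [← Real.rpow_natCast (2 ^ d * p) T]
    calc (2 ^ d * p) ^ ((T : ℕ) : ℝ)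
        ≤ (2 ^ d * p) ^ (max (Real.logb 2 (max (zdiam A) 1)) (m : ℝ) + 1) :=
          Real.rpow_le_rpow_of_exponent_le hr1.le hTM
      _ = (2 ^ d * p) ^ max (Real.logb 2 (max (zdiam A) 1)) (m : ℝ) * (2 ^ d * p) ^ (1:ℝ) := by
          rw [Real.rpow_add (by linarith)]
      _ = (2 ^ d * p) ^ max (Real.logb 2 (max (zdiam A) 1)) (m : ℝ) * (2 ^ d * p) := by
          rw [Real.rpow_one]
      _ ≤ (2 ^ d * p) ^ max (Real.logb 2 (max (zdiam A) 1)) (m : ℝ) * 2 ^ d := by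
          apply mul_le_mul_of_nonneg_left _ (Real.rpow_nonneg (by linarith) _)
          nlinarith
      _ = 2 ^ d * (2 ^ d * p) ^ max (Real.logb 2 (max (zdiam A) 1)) (m : ℝ) := mul_comm _ _
  -- put everything together
  have hLfinal : (∑ z, ∑ z', b z * b z' *
        max (zdist (xm z + xn z) (xm z' + xn z')) 1 ^ Real.logb 2 (2 ^ d * p * q))
      ≤ (2 ^ d * p * q)⁻¹ *
        ((7 ^ d * ((1 - p * q)⁻¹ * ((2:ℝ) ^ (d * m) *
          ∑ z, ∑ z', b z * b z' *
            (p ^ treeDist d m (xm z) (xm z') * q ^ treeDist d n (xn z) (xn z')))))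
        + ((2 ^ d * p) ^ T * (2 ^ d * p * (2 ^ d * p - 1)⁻¹)) *
            (5 ^ d * ((p ^ m)⁻¹ * ∑ z, ∑ z', b z * b z' *
              (p ^ treeDist d m (xm z) (xm z') * q ^ treeDist d n (xn z) (xn z'))))) := by
    refine le_trans hR1 ?_
    apply mul_le_mul_of_nonneg_left _ (inv_nonneg.mpr hx0.le)
    rw [hsplit]
    refine add_le_add hLOW ?_
    refine le_trans hMID ?_
    exact mul_le_mul_of_nonneg_left
      (mul_le_mul_of_nonneg_left hE2E (by positivity))
      (mul_nonneg (pow_nonneg (by positivity) T) hC2.le)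
  -- final computation
  have hEassoc : (∑ z, ∑ z', b z * b z' *
        p ^ treeDist d m (xm z) (xm z') * q ^ treeDist d n (xn z) (xn z'))
      = ∑ z, ∑ z', b z * b z' *
        (p ^ treeDist d m (xm z) (xm z') * q ^ treeDist d n (xn z) (xn z')) :=
    Finset.sum_congr rfl fun z _ => Finset.sum_congr rfl fun z' _ => by ring
  have hXX : (2 ^ d * p * q) * (2 ^ d * p * q)⁻¹ = 1 := mul_inv_cancel₀ hx0.ne'
  calc (2 ^ d * p * q) *
      (7 ^ d * (1 - p * q)⁻¹ + 5 ^ d * (2 ^ d * p * (2 ^ d * p - 1)⁻¹) * 2 ^ d)⁻¹ * p ^ m *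
      (∑ z, ∑ z', b z * b z' *
        max (zdist (xm z + xn z) (xm z' + xn z')) 1 ^ Real.logb 2 (2 ^ d * p * q))
      ≤ (2 ^ d * p * q) *
        (7 ^ d * (1 - p * q)⁻¹ + 5 ^ d * (2 ^ d * p * (2 ^ d * p - 1)⁻¹) * 2 ^ d)⁻¹ * p ^ m *
        ((2 ^ d * p * q)⁻¹ *
        ((7 ^ d * ((1 - p * q)⁻¹ * ((2:ℝ) ^ (d * m) *
          ∑ z, ∑ z', b z * b z' *
            (p ^ treeDist d m (xm z) (xm z') * q ^ treeDist d n (xn z) (xn z')))))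
        + ((2 ^ d * p) ^ T * (2 ^ d * p * (2 ^ d * p - 1)⁻¹)) *
            (5 ^ d * ((p ^ m)⁻¹ * ∑ z, ∑ z', b z * b z' *
              (p ^ treeDist d m (xm z) (xm z') * q ^ treeDist d n (xn z) (xn z')))))) := by
        exact mul_le_mul_of_nonneg_left hLfinal
          (mul_nonneg hcpos.le (pow_nonneg hp0.le m))
    _ = (7 ^ d * (1 - p * q)⁻¹ + 5 ^ d * (2 ^ d * p * (2 ^ d * p - 1)⁻¹) * 2 ^ d)⁻¹ *
        (p ^ m * (7 ^ d * ((1 - p * q)⁻¹ * ((2:ℝ) ^ (d * m) *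
          ∑ z, ∑ z', b z * b z' *
            (p ^ treeDist d m (xm z) (xm z') * q ^ treeDist d n (xn z) (xn z')))))
        + p ^ m * (((2 ^ d * p) ^ T * (2 ^ d * p * (2 ^ d * p - 1)⁻¹)) *
            (5 ^ d * ((p ^ m)⁻¹ * ∑ z, ∑ z', b z * b z' *
              (p ^ treeDist d m (xm z) (xm z') * q ^ treeDist d n (xn z) (xn z')))))) := by
        rw [show ∀ K' S : ℝ, (2 ^ d * p * q) * K' * p ^ m * ((2 ^ d * p * q)⁻¹ * S)
            = ((2 ^ d * p * q) * (2 ^ d * p * q)⁻¹) * (K' * (p ^ m * S)) from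
          fun K' S => by ring, hXX, one_mul]
        ring
    _ ≤ (7 ^ d * (1 - p * q)⁻¹ + 5 ^ d * (2 ^ d * p * (2 ^ d * p - 1)⁻¹) * 2 ^ d)⁻¹ *
        ((7 ^ d * (1 - p * q)⁻¹ + 5 ^ d * (2 ^ d * p * (2 ^ d * p - 1)⁻¹) * 2 ^ d) *
          ((2 ^ d * p) ^ max (Real.logb 2 (max (zdiam A) 1)) (m : ℝ) *
            ∑ z, ∑ z', b z * b z' *
              (p ^ treeDist d m (xm z) (xm z') * q ^ treeDist d n (xn z) (xn z')))) := by
        apply mul_le_mul_of_nonneg_left _ (inv_nonneg.mpr hK0.le)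
        have hA : p ^ m * (7 ^ d * ((1 - p * q)⁻¹ * ((2:ℝ) ^ (d * m) *
              ∑ z, ∑ z', b z * b z' *
                (p ^ treeDist d m (xm z) (xm z') * q ^ treeDist d n (xn z) (xn z')))))
            = 7 ^ d * (1 - p * q)⁻¹ * ((2 ^ d * p) ^ m *
              ∑ z, ∑ z', b z * b z' *
                (p ^ treeDist d m (xm z) (xm z') * q ^ treeDist d n (xn z) (xn z'))) := by
          rw [show ((2:ℝ) ^ d * p) ^ m = (2:ℝ) ^ (d * m) * p ^ m from by
            rw [mul_pow, pow_mul]]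
          ring
        have hB : p ^ m * (((2 ^ d * p) ^ T * (2 ^ d * p * (2 ^ d * p - 1)⁻¹)) *
              (5 ^ d * ((p ^ m)⁻¹ * ∑ z, ∑ z', b z * b z' *
                (p ^ treeDist d m (xm z) (xm z') * q ^ treeDist d n (xn z) (xn z')))))
            = 5 ^ d * (2 ^ d * p * (2 ^ d * p - 1)⁻¹) * ((2 ^ d * p) ^ T *
              ∑ z, ∑ z', b z * b z' *
                (p ^ treeDist d m (xm z) (xm z') * q ^ treeDist d n (xn z) (xn z'))) := by
          rw [show p ^ m * (((2 ^ d * p) ^ T * (2 ^ d * p * (2 ^ d * p - 1)⁻¹)) *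
                (5 ^ d * ((p ^ m)⁻¹ * ∑ z, ∑ z', b z * b z' *
                  (p ^ treeDist d m (xm z) (xm z') * q ^ treeDist d n (xn z) (xn z')))))
              = (p ^ m * (p ^ m)⁻¹) * (5 ^ d * (2 ^ d * p * (2 ^ d * p - 1)⁻¹) *
                ((2 ^ d * p) ^ T * ∑ z, ∑ z', b z * b z' *
                  (p ^ treeDist d m (xm z) (xm z') * q ^ treeDist d n (xn z) (xn z')))) from
            by ring, mul_inv_cancel₀ (pow_ne_zero m hp0.ne'), one_mul]
        have hA2 : 7 ^ d * (1 - p * q)⁻¹ * ((2 ^ d * p) ^ m *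
              ∑ z, ∑ z', b z * b z' *
                (p ^ treeDist d m (xm z) (xm z') * q ^ treeDist d n (xn z) (xn z')))
            ≤ 7 ^ d * (1 - p * q)⁻¹ *
              ((2 ^ d * p) ^ max (Real.logb 2 (max (zdiam A) 1)) (m : ℝ) *
              ∑ z, ∑ z', b z * b z' *
                (p ^ treeDist d m (xm z) (xm z') * q ^ treeDist d n (xn z) (xn z'))) :=
          mul_le_mul_of_nonneg_left (mul_le_mul_of_nonneg_right hrm hE0)
            (mul_nonneg (by positivity) hC1.le)
        have hB2 : 5 ^ d * (2 ^ d * p * (2 ^ d * p - 1)⁻¹) * ((2 ^ d * p) ^ T *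
              ∑ z, ∑ z', b z * b z' *
                (p ^ treeDist d m (xm z) (xm z') * q ^ treeDist d n (xn z) (xn z')))
            ≤ 5 ^ d * (2 ^ d * p * (2 ^ d * p - 1)⁻¹) *
              ((2 ^ d * (2 ^ d * p) ^ max (Real.logb 2 (max (zdiam A) 1)) (m : ℝ)) *
              ∑ z, ∑ z', b z * b z' *
                (p ^ treeDist d m (xm z) (xm z') * q ^ treeDist d n (xn z) (xn z'))) :=
          mul_le_mul_of_nonneg_left (mul_le_mul_of_nonneg_right hrT hE0)
            (mul_nonneg (by positivity) hC2.le)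
        calc p ^ m * (7 ^ d * ((1 - p * q)⁻¹ * ((2:ℝ) ^ (d * m) *
              ∑ z, ∑ z', b z * b z' *
                (p ^ treeDist d m (xm z) (xm z') * q ^ treeDist d n (xn z) (xn z')))))
            + p ^ m * (((2 ^ d * p) ^ T * (2 ^ d * p * (2 ^ d * p - 1)⁻¹)) *
              (5 ^ d * ((p ^ m)⁻¹ * ∑ z, ∑ z', b z * b z' *
                (p ^ treeDist d m (xm z) (xm z') * q ^ treeDist d n (xn z) (xn z')))))
            ≤ 7 ^ d * (1 - p * q)⁻¹ *
                ((2 ^ d * p) ^ max (Real.logb 2 (max (zdiam A) 1)) (m : ℝ) *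
                ∑ z, ∑ z', b z * b z' *
                  (p ^ treeDist d m (xm z) (xm z') * q ^ treeDist d n (xn z) (xn z')))
              + 5 ^ d * (2 ^ d * p * (2 ^ d * p - 1)⁻¹) *
                ((2 ^ d * (2 ^ d * p) ^ max (Real.logb 2 (max (zdiam A) 1)) (m : ℝ)) *
                ∑ z, ∑ z', b z * b z' *
                  (p ^ treeDist d m (xm z) (xm z') * q ^ treeDist d n (xn z) (xn z'))) := by
              rw [hA, hB]
              exact add_le_add hA2 hB2
          _ = (7 ^ d * (1 - p * q)⁻¹ + 5 ^ d * (2 ^ d * p * (2 ^ d * p - 1)⁻¹) * 2 ^ d) *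
              ((2 ^ d * p) ^ max (Real.logb 2 (max (zdiam A) 1)) (m : ℝ) *
                ∑ z, ∑ z', b z * b z' *
                  (p ^ treeDist d m (xm z) (xm z') * q ^ treeDist d n (xn z) (xn z'))) := by
              ring
    _ = (2 ^ d * p) ^ max (Real.logb 2 (max (zdiam A) 1)) (m : ℝ) *
          ∑ z, ∑ z', b z * b z' *
            (p ^ treeDist d m (xm z) (xm z') * q ^ treeDist d n (xn z) (xn z')) := by
        rw [← mul_assoc, inv_mul_cancel₀ hK0.ne', one_mul]
    _ = (2 ^ d * p) ^ max (Real.logb 2 (max (zdiam A) 1)) (m : ℝ) *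
          ∑ z, ∑ z', b z * b z' *
            p ^ treeDist d m (xm z) (xm z') * q ^ treeDist d n (xn z) (xn z') := by
        rw [hEassoc]
end
end

section
/- Let d ≥ 1 and let p, q ∈ (2^{−d}, 1) satisfy 2^d p q ≥ 1. Then there exists a constant c > 0 depending only on d, p, q such that for every 1 ≤ m ≤ n and every nonempty set A ⊆ Δ_n := [−2^{n−1}, 2^{n−1})^d ∩ ℤ^d: if 2^d p q > 1 then P((Q_d(p;m) + Q̂_d(q;n)) ∩ A ≠ ∅) ≥ c·q^{n−m}, and if 2^d p q = 1 then P((Q_d(p;m) + Q̂_d(q;n)) ∩ A ≠ ∅) ≥ c·m^{−1}·q^{n−m}. -/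
open MeasureTheory ProbabilityTheory Set Pointwise
open scoped ENNReal Classical

noncomputable section

namespace FP13

lemma close_of_code_eq {d k j : ℕ} {x y : Zd d}
    (h : ancestorCode d k j x = ancestorCode d k j y) (i : Fin d) :
    |x i - y i| < (2:ℤ) ^ (k - j) := by
  have hc : (0:ℤ) < 2 ^ (k - j) := by positivity
  have hi := congrFun h i
  unfold ancestorCode at hi
  set c : ℤ := 2 ^ (k - j) with hcdef
  set u : ℤ := x i + 2 ^ (k-1) with hudef
  set v : ℤ := y i + 2 ^ (k-1) with hvdef
  have hu := Int.mul_ediv_add_emod u c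
  have hv := Int.mul_ediv_add_emod v c
  have hprod : c * (u / c) = c * (v / c) := by rw [hi]
  have h1 : x i - y i = u % c - v % c := by
    have : u - v = x i - y i := by rw [hudef, hvdef]; ring
    omega
  have hu1 : 0 ≤ u % c := Int.emod_nonneg u (ne_of_gt hc)
  have hu2 : u % c < c := Int.emod_lt_of_pos u hc
  have hv1 : 0 ≤ v % c := Int.emod_nonneg v (ne_of_gt hc)
  have hv2 : v % c < c := Int.emod_lt_of_pos v hc
  rw [abs_lt]
  omega

lemma code_ne {d k : ℕ} {x y : Zd d} {j : Fin k} (i : Fin d)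
    (h : (2:ℤ) ^ (k - ((j:ℕ)+1)) ≤ |x i - y i|) :
    ancestorCode d k ((j:ℕ)+1) x ≠ ancestorCode d k ((j:ℕ)+1) y :=
  fun he => absurd (close_of_code_eq he i) (not_lt.2 h)

lemma card_diff_ge {d k s : ℕ} {x y : Zd d} (hs : s + 1 ≤ k) (i0 : Fin d)
    (ht : (2:ℤ) ^ s ≤ |x i0 - y i0|) :
    s + 1 ≤ (Finset.univ.filter (fun j : Fin k =>
      ancestorCode d k ((j:ℕ)+1) x ≠ ancestorCode d k ((j:ℕ)+1) y)).card := by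
  classical
  set g : Fin (s+1) → Fin k := fun i => ⟨k - 1 - s + (i:ℕ), by have := i.isLt; omega⟩ with hg
  have hmap : ∀ i ∈ (Finset.univ : Finset (Fin (s+1))), g i ∈ Finset.univ.filter (fun j : Fin k =>
      ancestorCode d k ((j:ℕ)+1) x ≠ ancestorCode d k ((j:ℕ)+1) y) := by
    intro i _
    simp only [Finset.mem_filter, Finset.mem_univ, true_and]
    have hle : (2:ℤ) ^ (k - (((g i : Fin k) : ℕ)+1)) ≤ |x i0 - y i0| := by
      refine le_trans ?_ ht
      apply pow_le_pow_right₀ (by norm_num)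
      have h1 := i.isLt
      show k - ((k - 1 - s + (i:ℕ)) + 1) ≤ s
      omega
    exact code_ne (j := g i) i0 hle
  have hinj : Set.InjOn g (Finset.univ : Finset (Fin (s+1))) := by
    intro i _ i' _ hii
    have : k - 1 - s + (i:ℕ) = k - 1 - s + (i':ℕ) := congrArg Fin.val hii
    exact Fin.ext (by omega)
  have := Finset.card_le_card_of_injOn g hmap hinj
  simpa using this

lemma chung_erdos {Ω : Type} [MeasurableSpace Ω] (P : Measure Ω) {ι : Type} (B : Finset ι)
    (E : ι → Set Ω) (hE : ∀ i, MeasurableSet (E i)) :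
    (∑ i ∈ B, P (E i)) ^ 2 ≤ P (⋃ i ∈ B, E i) * ∑ i ∈ B, ∑ j ∈ B, P (E i ∩ E j) := by
  classical
  set U : Set Ω := ⋃ i ∈ B, E i with hU
  have hUmeas : MeasurableSet U := MeasurableSet.biUnion B.countable_toSet (fun i _ => hE i)
  set f : Ω → ℝ≥0∞ := fun ω => ∑ i ∈ B, (E i).indicator 1 ω with hf
  set g : Ω → ℝ≥0∞ := U.indicator 1 with hg
  have hfmeas : Measurable f := by
    apply Finset.measurable_sum
    exact fun i _ => measurable_one.indicator (hE i)
  have hgmeas : Measurable g := measurable_one.indicator hUmeas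
  have hfg : f * g = f := by
    funext ω
    by_cases hω : ω ∈ U
    · simp [hg, Set.indicator_of_mem hω]
    · have : f ω = 0 := by
        apply Finset.sum_eq_zero
        intro i hi
        exact Set.indicator_of_notMem (fun h => hω (Set.mem_biUnion hi h)) _
      simp [this]
  have hint_f : ∫⁻ ω, f ω ∂P = ∑ i ∈ B, P (E i) := by
    rw [hf]
    rw [lintegral_finset_sum _ (fun i _ => measurable_one.indicator (hE i))]
    exact Finset.sum_congr rfl fun i _ => lintegral_indicator_one (hE i)
  have hint_g : ∫⁻ ω, g ω ^ (2:ℝ) ∂P = P U := by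
    have : ∀ ω, g ω ^ (2:ℝ) = g ω := by
      intro ω
      by_cases hω : ω ∈ U
      · simp [hg, Set.indicator_of_mem hω]
      · simp [hg, Set.indicator_of_notMem hω, ENNReal.zero_rpow_of_pos]
    simp_rw [this]
    exact lintegral_indicator_one hUmeas
  have hint_f2 : ∫⁻ ω, f ω ^ (2:ℝ) ∂P = ∑ i ∈ B, ∑ j ∈ B, P (E i ∩ E j) := by
    have h1 : ∀ ω, f ω ^ (2:ℝ) = ∑ i ∈ B, ∑ j ∈ B, (E i ∩ E j).indicator 1 ω := by
      intro ω
      have h2 : f ω ^ (2:ℝ) = f ω ^ (2:ℕ) := by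
        rw [← ENNReal.rpow_natCast]; norm_num
      rw [h2, pow_two, hf, Finset.sum_mul_sum]
      refine Finset.sum_congr rfl fun i _ => Finset.sum_congr rfl fun j _ => ?_
      rw [Set.inter_indicator_one]
      rfl
    simp_rw [h1]
    rw [lintegral_finset_sum _ (fun i _ => Finset.measurable_sum _
      (fun j _ => measurable_one.indicator ((hE i).inter (hE j))))]
    refine Finset.sum_congr rfl fun i _ => ?_
    rw [lintegral_finset_sum _ (fun j _ => measurable_one.indicator ((hE i).inter (hE j)))]
    exact Finset.sum_congr rfl fun j _ => lintegral_indicator_one ((hE i).inter (hE j))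
  have hconj : (2:ℝ).HolderConjugate 2 := Real.HolderConjugate.two_two
  have hCS := ENNReal.lintegral_mul_le_Lp_mul_Lq P hconj hfmeas.aemeasurable hgmeas.aemeasurable
  rw [hfg, hint_f, hint_f2, hint_g] at hCS
  calc (∑ i ∈ B, P (E i)) ^ 2
      ≤ ((∑ i ∈ B, ∑ j ∈ B, P (E i ∩ E j)) ^ (1/2:ℝ) * P U ^ (1/2:ℝ)) ^ 2 := by
        exact pow_le_pow_left' hCS 2
    _ = P U * ∑ i ∈ B, ∑ j ∈ B, P (E i ∩ E j) := by
        have hx : ∀ x : ℝ≥0∞, (x ^ (1/2:ℝ)) ^ (2:ℕ) = x := by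
          intro x
          rw [← ENNReal.rpow_natCast (x ^ (1/2:ℝ)) 2, ← ENNReal.rpow_mul]
          norm_num
        rw [mul_pow, hx, hx, mul_comm]

lemma meas_LR {d m n : ℕ} {p q : ℝ} {Ω : Type} [MeasurableSpace Ω] {P : Measure Ω}
    {X : TreeEdge d m ⊕ TreeEdge d n → Ω → Bool}
    (hind : iIndepFun X P)
    (hXp : ∀ e, P {ω | X (Sum.inl e) ω = true} = ENNReal.ofReal p)
    (hXq : ∀ e, P {ω | X (Sum.inr e) ω = true} = ENNReal.ofReal q)
    (L : Finset (TreeEdge d m)) (R : Finset (TreeEdge d n)) :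
    P ((⋂ e ∈ L, {ω | X (Sum.inl e) ω = true}) ∩ ⋂ e ∈ R, {ω | X (Sum.inr e) ω = true})
      = ENNReal.ofReal p ^ L.card * ENNReal.ofReal q ^ R.card := by
  classical
  have hpre : ∀ e, X e ⁻¹' {true} = {ω | X e ω = true} := fun e => by ext ω; simp
  have hset : ((⋂ e ∈ L, {ω | X (Sum.inl e) ω = true}) ∩ ⋂ e ∈ R, {ω | X (Sum.inr e) ω = true})
      = ⋂ e ∈ (L.image Sum.inl ∪ R.image Sum.inr), X e ⁻¹' (fun _ => ({true} : Set Bool)) e := by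
    simp only [hpre]
    ext ω
    simp only [Set.mem_inter_iff, Set.mem_iInter, Finset.mem_union, Finset.mem_image,
      Set.mem_setOf_eq]
    constructor
    · rintro ⟨h1, h2⟩ e (⟨e', he', rfl⟩ | ⟨e', he', rfl⟩)
      · exact h1 e' he'
      · exact h2 e' he'
    · intro h
      exact ⟨fun e he => h _ (Or.inl ⟨e, he, rfl⟩), fun e he => h _ (Or.inr ⟨e, he, rfl⟩)⟩
  rw [hset, (iIndepFun_iff_measure_inter_preimage_eq_mul.1 hind) _
    (fun i _ => measurableSet_singleton true)]
  rw [Finset.prod_union (by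
    rw [Finset.disjoint_left]
    intro e he1 he2
    obtain ⟨e', _, rfl⟩ := Finset.mem_image.1 he1
    obtain ⟨e'', _, h⟩ := Finset.mem_image.1 he2
    exact Sum.inl_ne_inr h.symm)]
  rw [Finset.prod_image (fun a _ b _ h => Sum.inl_injective h),
    Finset.prod_image (fun a _ b _ h => Sum.inr_injective h)]
  congr 1
  · rw [Finset.prod_congr rfl (fun e _ => by rw [hpre, hXp e]), Finset.prod_const]
  · rw [Finset.prod_congr rfl (fun e _ => by rw [hpre, hXq e]), Finset.prod_const]

end FP13

set_option maxHeartbeats 4000000 in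
/-- Lower bounds for the hitting probability of the Minkowski sum of
two independent fractal percolations in the supercritical (`2^d p q > 1`) and critical
(`2^d p q = 1`) regimes. -/
theorem statement13 (d : ℕ) (hd : 1 ≤ d) (p q : ℝ)
    (hp : p ∈ Set.Ioo (((2:ℝ) ^ d)⁻¹) 1) (hq : q ∈ Set.Ioo (((2:ℝ) ^ d)⁻¹) 1)
    (hpq : 1 ≤ 2 ^ d * p * q) :
    ∃ c : ℝ, 0 < c ∧
      ∀ (m n : ℕ), 1 ≤ m → m ≤ n →
      ∀ (Ω : Type) (mΩ : MeasurableSpace Ω) (P : Measure Ω),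
        IsProbabilityMeasure P →
      ∀ X : TreeEdge d m ⊕ TreeEdge d n → Ω → Bool,
        (∀ e, Measurable (X e)) →
        iIndepFun X P →
        (∀ e, P {ω | X (Sum.inl e) ω = true} = ENNReal.ofReal p) →
        (∀ e, P {ω | X (Sum.inr e) ω = true} = ENNReal.ofReal q) →
      ∀ A : Set (Zd d), A.Nonempty → A ⊆ box d n →
        ((1 < 2 ^ d * p * q →
          ENNReal.ofReal (c * q ^ (n - m)) ≤
            P {ω | ((percCluster d m (fun e => X (Sum.inl e) ω) +
                     percCluster d n fun e => X (Sum.inr e) ω) ∩ A).Nonempty}) ∧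
         (2 ^ d * p * q = 1 →
          ENNReal.ofReal (c * (m : ℝ)⁻¹ * q ^ (n - m)) ≤
            P {ω | ((percCluster d m (fun e => X (Sum.inl e) ω) +
                     percCluster d n fun e => X (Sum.inr e) ω) ∩ A).Nonempty})) := by
  classical
  obtain ⟨hp0, hp1⟩ := hp
  obtain ⟨hq0, hq1⟩ := hq
  have h2dpos : (0:ℝ) < 2 ^ d := by positivity
  have hppos : 0 < p := lt_trans (by positivity) hp0
  have hqpos : 0 < q := lt_trans (by positivity) hq0
  have hpq1 : p * q < 1 := by nlinarith
  have hpqpos : 0 < p * q := by positivity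
  set lam : ℝ := 2 ^ d * p * q with hlam
  have hlam1 : 1 ≤ lam := hpq
  set Lam : ℝ := if 1 < lam then lam - 1 else 1 with hLam
  have hLampos : 0 < Lam := by
    rw [hLam]; split
    · linarith
    · norm_num
  have h8pos : (0:ℝ) < 1 + 8 ^ d := by positivity
  refine ⟨((2:ℝ) ^ d)⁻¹ * min 1 Lam / (1 + 8 ^ d), by positivity, ?_⟩
  intro m n hm hmn Ω mΩ P hP X hXmeas hind hXp hXq A hA hAbox
  obtain ⟨a, ha⟩ := hA
  have haBox : a ∈ box d n := hAbox ha
  -- the geometric series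
  set K : ℝ := ∑ s ∈ Finset.range m, lam ^ s with hK
  have hK1 : 1 ≤ K := by
    rw [hK]
    calc (1:ℝ) = lam ^ 0 := by norm_num
    _ ≤ ∑ s ∈ Finset.range m, lam ^ s := by
        apply Finset.single_le_sum (fun s _ => by positivity)
        simpa using (show 0 < m by omega)
  have hKpos : 0 < K := lt_of_lt_of_le one_pos hK1
  set E0 : ℝ := 1 + 8^d * K with hE0
  have hE0pos : 0 < E0 := by rw [hE0]; positivity
  -- distance
  set tt : Zd d → Zd d → ℕ := fun x y => Finset.univ.sup (fun i => (x i - y i).natAbs) with htt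
  have h2m : ((2:ℤ)^(m-1)) = ((2^(m-1) : ℕ) : ℤ) := by push_cast; ring
  -- the box of base points
  set Bf : Finset (Zd d) := Fintype.piFinset (fun i => if 0 ≤ a i then Finset.Ico 0 (2^(m-1))
    else Finset.Ico (-(2:ℤ)^(m-1)) 0) with hBf
  have hBmem : ∀ x ∈ Bf, ∀ i : Fin d,
      (-(2:ℤ)^(m-1) ≤ x i ∧ x i < 2^(m-1)) ∧ (0 ≤ a i → 0 ≤ x i) ∧ (a i < 0 → x i < 0) := by
    intro x hx i
    have hpow : (0:ℤ) < 2^(m-1) := by positivity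
    have hthis := (Fintype.mem_piFinset.1 hx) i
    split at hthis <;> rw [Finset.mem_Ico] at hthis <;> omega
  have hBbox : ∀ x ∈ Bf, x ∈ box d m := by
    intro x hx i
    exact (hBmem x hx i).1
  have hBboxn : ∀ x ∈ Bf, a - x ∈ box d n := by
    intro x hx i
    have h1 := hBmem x hx i
    have h2 := haBox i
    have h3 : (2:ℤ)^(m-1) ≤ 2^(n-1) := pow_le_pow_right₀ (by norm_num) (by omega)
    have h4 : (a - x) i = a i - x i := rfl
    rw [h4]
    omega
  have hBcardNat : Bf.card = 2 ^ ((m-1)*d) := by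
    rw [hBf, Fintype.card_piFinset]
    have hone : ∀ i : Fin d, ((if 0 ≤ a i then Finset.Ico (0:ℤ) (2^(m-1))
        else Finset.Ico (-(2:ℤ)^(m-1)) 0).card) = 2^(m-1) := by
      intro i
      split
      · rw [Int.card_Ico, sub_zero, h2m, Int.toNat_natCast]
      · rw [Int.card_Ico, zero_sub, neg_neg, h2m, Int.toNat_natCast]
    rw [Finset.prod_congr rfl (fun i _ => hone i), Finset.prod_const, Finset.card_univ,
      Fintype.card_fin, ← pow_mul]
  have hBclose : ∀ x ∈ Bf, ∀ y ∈ Bf, ∀ i : Fin d, (x i - y i).natAbs < 2^(m-1) := by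
    intro x hx y hy i
    have h1 := hBmem x hx i
    have h2 := hBmem y hy i
    omega
  have htlt : ∀ x ∈ Bf, ∀ y ∈ Bf, tt x y < 2^(m-1) := by
    intro x hx y hy
    rw [htt]
    apply Finset.sup_lt_iff (by positivity) |>.2
    intro i _
    exact hBclose x hx y hy i
  have htne : ∀ x y : Zd d, x ≠ y → tt x y ≠ 0 := by
    intro x y hxy h0
    apply hxy
    funext i
    simp only [htt] at h0
    have h1 : (x i - y i).natAbs ≤ Finset.univ.sup (fun i => (x i - y i).natAbs) :=
      Finset.le_sup (f := fun i => (x i - y i).natAbs) (Finset.mem_univ i)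
    rw [h0] at h1
    omega
  -- events
  set pth : (k : ℕ) → Zd d → Finset (TreeEdge d k) := fun k x =>
    Finset.univ.image (fun j : Fin k => (j, ancestorCode d k ((j:ℕ)+1) x)) with hpth
  have hpthcard : ∀ (k : ℕ) (x : Zd d), (pth k x).card = k := by
    intro k x
    rw [hpth, Finset.card_image_of_injective _ (fun j j' h => (Prod.ext_iff.1 h).1),
      Finset.card_univ, Fintype.card_fin]
  set Ev : Zd d → Set Ω := fun x =>
    (⋂ e ∈ pth m x, {ω | X (Sum.inl e) ω = true}) ∩
      ⋂ e ∈ pth n (a - x), {ω | X (Sum.inr e) ω = true} with hEv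
  have hEvMeas : ∀ x, MeasurableSet (Ev x) := by
    intro x
    apply MeasurableSet.inter <;>
    · apply MeasurableSet.biInter (Finset.countable_toSet _)
      intro e _
      exact (hXmeas _) (measurableSet_singleton true)
  set αr : ℝ := p ^ m * q ^ n with hαr
  have hαrpos : 0 < αr := by rw [hαr]; positivity
  have hEvP : ∀ x, P (Ev x) = ENNReal.ofReal αr := by
    intro x
    rw [hEv]
    show P (_ ∩ _) = _
    rw [FP13.meas_LR hind hXp hXq, hpthcard, hpthcard, hαr,
      ENNReal.ofReal_mul (by positivity), ENNReal.ofReal_pow hppos.le,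
      ENNReal.ofReal_pow hqpos.le]
  -- inclusion into the target event
  set T : Set Ω := {ω | ((percCluster d m (fun e => X (Sum.inl e) ω) +
      percCluster d n fun e => X (Sum.inr e) ω) ∩ A).Nonempty} with hT
  have hEvT : ∀ x ∈ Bf, Ev x ⊆ T := by
    intro x hx ω hω
    obtain ⟨h1, h2⟩ := hω
    simp only [Set.mem_iInter] at h1 h2
    refine ⟨a, Set.mem_inter ?_ ha⟩
    rw [Set.mem_add]
    refine ⟨x, ⟨hBbox x hx, ?_⟩, a - x, ⟨hBboxn x hx, ?_⟩, by abel⟩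
    · exact fun j => h1 _ (Finset.mem_image_of_mem _ (Finset.mem_univ j))
    · exact fun j => h2 _ (Finset.mem_image_of_mem _ (Finset.mem_univ j))
  -- pair bound
  have hpair : ∀ x ∈ Bf, ∀ y ∈ Bf, x ≠ y →
      P (Ev x ∩ Ev y) ≤ ENNReal.ofReal (αr * (p*q)^(Nat.log 2 (tt x y)+1)) := by
    intro x hx y hy hxy
    have ht0 : tt x y ≠ 0 := htne x y hxy
    set s := Nat.log 2 (tt x y) with hsdef
    have hsm : s + 1 < m := by
      have h1 : s < m - 1 := Nat.log_lt_of_lt_pow ht0 (htlt x hx y hy)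
      omega
    have hsn : s + 1 ≤ n := by omega
    obtain ⟨i0⟩ : Nonempty (Fin d) := ⟨⟨0, hd⟩⟩
    obtain ⟨i0, -, hi0⟩ := Finset.exists_mem_eq_sup Finset.univ
      (Finset.univ_nonempty_iff.2 ⟨i0⟩) (fun i => (x i - y i).natAbs)
    have htEq : tt x y = (x i0 - y i0).natAbs := by rw [htt]; exact hi0
    have hts : (2:ℤ)^s ≤ |x i0 - y i0| := by
      have h1 : 2^s ≤ (x i0 - y i0).natAbs := by
        rw [← htEq, hsdef]
        exact Nat.pow_log_le_self 2 ht0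
      have h2 : ((2^s : ℕ):ℤ) ≤ ((x i0 - y i0).natAbs : ℤ) := by exact_mod_cast h1
      calc (2:ℤ)^s = ((2^s:ℕ):ℤ) := by push_cast; ring
      _ ≤ ((x i0 - y i0).natAbs : ℤ) := h2
      _ = |x i0 - y i0| := (Int.abs_eq_natAbs _).symm
    have hts' : (2:ℤ)^s ≤ |(a - x) i0 - (a - y) i0| := by
      have heq : (a - x) i0 - (a - y) i0 = -(x i0 - y i0) := by
        show a i0 - x i0 - (a i0 - y i0) = _
        ring
      rw [heq, abs_neg]
      exact hts
    have hrL := FP13.card_diff_ge (d := d) (k := m) (x := x) (y := y) (le_of_lt hsm) i0 hts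
    have hrR := FP13.card_diff_ge (d := d) (k := n) (x := a - x) (y := a - y) hsn i0 hts'
    set DL : Finset (Fin m) := Finset.univ.filter (fun j : Fin m =>
      ancestorCode d m ((j:ℕ)+1) x ≠ ancestorCode d m ((j:ℕ)+1) y) with hDL
    set DR : Finset (Fin n) := Finset.univ.filter (fun j : Fin n =>
      ancestorCode d n ((j:ℕ)+1) (a - x) ≠ ancestorCode d n ((j:ℕ)+1) (a - y)) with hDR
    set L' : Finset (TreeEdge d m) := pth m x ∪ DL.image
      (fun j : Fin m => (j, ancestorCode d m ((j:ℕ)+1) y)) with hL'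
    set R' : Finset (TreeEdge d n) := pth n (a - x) ∪ DR.image
      (fun j : Fin n => (j, ancestorCode d n ((j:ℕ)+1) (a - y))) with hR'
    have hsub : Ev x ∩ Ev y ⊆
        (⋂ e ∈ L', {ω | X (Sum.inl e) ω = true}) ∩ ⋂ e ∈ R', {ω | X (Sum.inr e) ω = true} := by
      rintro ω ⟨⟨hx1, hx2⟩, ⟨hy1, hy2⟩⟩
      simp only [Set.mem_iInter] at hx1 hx2 hy1 hy2
      constructor
      · simp only [Set.mem_iInter, hL', Finset.mem_union]
        rintro e (he | he)
        · exact hx1 e he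
        · obtain ⟨j, hj, rfl⟩ := Finset.mem_image.1 he
          exact hy1 _ (Finset.mem_image_of_mem _ (Finset.mem_univ j))
      · simp only [Set.mem_iInter, hR', Finset.mem_union]
        rintro e (he | he)
        · exact hx2 e he
        · obtain ⟨j, hj, rfl⟩ := Finset.mem_image.1 he
          exact hy2 _ (Finset.mem_image_of_mem _ (Finset.mem_univ j))
    have hdisjL : Disjoint (pth m x) (DL.image
        (fun j : Fin m => (j, ancestorCode d m ((j:ℕ)+1) y))) := by
      rw [Finset.disjoint_left]
      intro e he1 he2
      obtain ⟨j, _, rfl⟩ := Finset.mem_image.1 he1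
      obtain ⟨j', hj', hj'e⟩ := Finset.mem_image.1 he2
      have h1 : j' = j := (Prod.ext_iff.1 hj'e).1
      have h2 := (Prod.ext_iff.1 hj'e).2
      rw [hDL, Finset.mem_filter] at hj'
      exact hj'.2 (by rw [h1] at h2 ⊢; exact h2.symm)
    have hdisjR : Disjoint (pth n (a - x)) (DR.image
        (fun j : Fin n => (j, ancestorCode d n ((j:ℕ)+1) (a - y)))) := by
      rw [Finset.disjoint_left]
      intro e he1 he2
      obtain ⟨j, _, rfl⟩ := Finset.mem_image.1 he1
      obtain ⟨j', hj', hj'e⟩ := Finset.mem_image.1 he2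
      have h1 : j' = j := (Prod.ext_iff.1 hj'e).1
      have h2 := (Prod.ext_iff.1 hj'e).2
      rw [hDR, Finset.mem_filter] at hj'
      exact hj'.2 (by rw [h1] at h2 ⊢; exact h2.symm)
    have hcardL : m + (s+1) ≤ L'.card := by
      rw [hL', Finset.card_union_of_disjoint hdisjL, hpthcard,
        Finset.card_image_of_injective _ (fun j j' h => (Prod.ext_iff.1 h).1)]
      omega
    have hcardR : n + (s+1) ≤ R'.card := by
      rw [hR', Finset.card_union_of_disjoint hdisjR, hpthcard,
        Finset.card_image_of_injective _ (fun j j' h => (Prod.ext_iff.1 h).1)]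
      omega
    calc P (Ev x ∩ Ev y) ≤ P ((⋂ e ∈ L', {ω | X (Sum.inl e) ω = true}) ∩
        ⋂ e ∈ R', {ω | X (Sum.inr e) ω = true}) := measure_mono hsub
    _ = ENNReal.ofReal p ^ L'.card * ENNReal.ofReal q ^ R'.card :=
        FP13.meas_LR hind hXp hXq L' R'
    _ = ENNReal.ofReal (p ^ L'.card * q ^ R'.card) := by
        rw [ENNReal.ofReal_mul (by positivity), ENNReal.ofReal_pow hppos.le,
          ENNReal.ofReal_pow hqpos.le]
    _ ≤ ENNReal.ofReal (αr * (p*q)^(s+1)) := by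
        apply ENNReal.ofReal_le_ofReal
        have h1 : p ^ L'.card ≤ p ^ (m + (s+1)) := pow_le_pow_of_le_one hppos.le hp1.le hcardL
        have h2 : q ^ R'.card ≤ q ^ (n + (s+1)) := pow_le_pow_of_le_one hqpos.le hq1.le hcardR
        have h3 : p ^ L'.card * q ^ R'.card ≤ p ^ (m + (s+1)) * q ^ (n + (s+1)) :=
          mul_le_mul h1 h2 (by positivity) (by positivity)
        have h4 : p ^ (m + (s+1)) * q ^ (n + (s+1)) = αr * (p*q)^(s+1) := by rw [hαr]; ring
        linarith
  -- off-diagonal sum bound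
  have hoff : ∀ x ∈ Bf, ∑ y ∈ Bf.erase x, (p*q)^(Nat.log 2 (tt x y)+1) ≤ 8^d * K := by
    intro x hx
    have hmaps : ∀ y ∈ Bf.erase x, Nat.log 2 (tt x y) ∈ Finset.range m := by
      intro y hy
      rw [Finset.mem_range]
      obtain ⟨hyx, hyB⟩ := Finset.mem_erase.1 hy
      have h1 : tt x y < 2^m := lt_of_lt_of_le (htlt x hx y hyB)
        (Nat.pow_le_pow_right (by norm_num) (by omega))
      have h2 : tt x y ≠ 0 := htne x y (Ne.symm hyx)
      exact Nat.log_lt_of_lt_pow h2 h1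
    rw [← Finset.sum_fiberwise_of_maps_to hmaps (fun y => (p*q)^(Nat.log 2 (tt x y)+1))]
    have hcard : ∀ s' ∈ Finset.range m,
        (((Bf.erase x).filter (fun y => Nat.log 2 (tt x y) = s')).card : ℝ) ≤ ((2:ℝ)^(s'+3))^d := by
      intro s' _
      have h2s : ((2:ℤ)^(s'+1)) = ((2^(s'+1) : ℕ) : ℤ) := by push_cast; ring
      have hinj : Set.InjOn (fun (y : Zd d) (i : Fin d) => y i - x i)
          ((Bf.erase x).filter (fun y => Nat.log 2 (tt x y) = s')) := by
        intro y _ y' _ hyy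
        funext i
        have := congrFun hyy i
        simp only at this
        omega
      have hmapsto : ∀ y ∈ (Bf.erase x).filter (fun y => Nat.log 2 (tt x y) = s'),
          (fun i => y i - x i) ∈ Fintype.piFinset
            (fun _ : Fin d => Finset.Icc (-(2:ℤ)^(s'+1)) ((2:ℤ)^(s'+1))) := by
        intro y hy
        rw [Finset.mem_filter] at hy
        obtain ⟨hy1, hy2⟩ := hy
        obtain ⟨hyx, hyB⟩ := Finset.mem_erase.1 hy1
        have ht0 : tt x y ≠ 0 := htne x y (Ne.symm hyx)
        have hlt : tt x y < 2^(s'+1) := by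
          have := Nat.lt_pow_succ_log_self (b := 2) (by norm_num) (tt x y)
          rwa [hy2] at this
        rw [Fintype.mem_piFinset]
        intro i
        rw [Finset.mem_Icc]
        have hle : (x i - y i).natAbs ≤ tt x y := by
          rw [htt]
          exact Finset.le_sup (f := fun i => (x i - y i).natAbs) (Finset.mem_univ i)
        have : (x i - y i).natAbs < 2^(s'+1) := lt_of_le_of_lt hle hlt
        omega
      have hc := Finset.card_le_card_of_injOn _ hmapsto hinj
      rw [Fintype.card_piFinset] at hc
      have hIcc : ∀ i : Fin d, (Finset.Icc (-(2:ℤ)^(s'+1)) ((2:ℤ)^(s'+1))).card = 2^(s'+2)+1 := by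
        intro i
        rw [Int.card_Icc]
        have : (2:ℤ)^(s'+2) = ((2^(s'+2) : ℕ) : ℤ) := by push_cast; ring
        have h22 : (2:ℤ)^(s'+2) = 2 * 2^(s'+1) := by ring
        have hApos : (0:ℤ) ≤ 2^(s'+1) := by positivity
        omega
      rw [Finset.prod_congr rfl (fun i _ => hIcc i), Finset.prod_const, Finset.card_univ,
        Fintype.card_fin] at hc
      calc (((Bf.erase x).filter (fun y => Nat.log 2 (tt x y) = s')).card : ℝ)
          ≤ (((2^(s'+2)+1 : ℕ))^d : ℕ) := by exact_mod_cast hc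
        _ ≤ (((2^(s'+3) : ℕ))^d : ℕ) := by
            apply Nat.cast_le.2
            apply Nat.pow_le_pow_left
            have : 2^(s'+3) = 2^(s'+2) + 2^(s'+2) := by ring
            have h1 : (1:ℕ) ≤ 2^(s'+2) := Nat.one_le_two_pow
            omega
        _ = ((2:ℝ)^(s'+3))^d := by push_cast; ring
    calc ∑ s' ∈ Finset.range m, ∑ y ∈ (Bf.erase x).filter (fun y => Nat.log 2 (tt x y) = s'),
          (p*q)^(Nat.log 2 (tt x y)+1)
        ≤ ∑ s' ∈ Finset.range m, 8^d * lam^s' := by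
          apply Finset.sum_le_sum
          intro s' hs'
          have heach : ∀ y ∈ (Bf.erase x).filter (fun y => Nat.log 2 (tt x y) = s'),
              (p*q)^(Nat.log 2 (tt x y)+1) = (p*q)^(s'+1) := by
            intro y hy
            rw [(Finset.mem_filter.1 hy).2]
          rw [Finset.sum_congr rfl heach, Finset.sum_const, nsmul_eq_mul]
          have h8d : ((2:ℝ)^(s'+3))^d = 8^d * ((2:ℝ)^d)^s' := by
            rw [← pow_mul, ← pow_mul]
            have : (8:ℝ)^d = 2^(3*d) := by rw [pow_mul]; norm_num
            rw [this, ← pow_add]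
            congr 1
            ring
          have hmono : (p*q)^(s'+1) ≤ (p*q)^s' :=
            pow_le_pow_of_le_one hpqpos.le hpq1.le (Nat.le_succ s')
          calc (((Bf.erase x).filter (fun y => Nat.log 2 (tt x y) = s')).card : ℝ) * (p*q)^(s'+1)
              ≤ ((2:ℝ)^(s'+3))^d * (p*q)^(s'+1) := by
                apply mul_le_mul_of_nonneg_right (hcard s' hs') (by positivity)
            _ = 8^d * (((2:ℝ)^d)^s' * (p*q)^(s'+1)) := by rw [h8d]; ring
            _ ≤ 8^d * (((2:ℝ)^d)^s' * (p*q)^s') := by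
                apply mul_le_mul_of_nonneg_left _ (by positivity)
                apply mul_le_mul_of_nonneg_left hmono (by positivity)
            _ = 8^d * lam^s' := by rw [hlam]; ring
      _ = 8^d * K := by rw [hK, Finset.mul_sum]
  -- first and second moment
  have hsum1 : ∑ x ∈ Bf, P (Ev x) = ENNReal.ofReal ((Bf.card : ℝ) * αr) := by
    have h1 : ∑ x ∈ Bf, P (Ev x) = (Bf.card : ℝ≥0∞) * ENNReal.ofReal αr := by
      rw [Finset.sum_congr rfl (fun x _ => hEvP x), Finset.sum_const, nsmul_eq_mul]
    rw [h1, ENNReal.ofReal_mul (Nat.cast_nonneg Bf.card), ENNReal.ofReal_natCast]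
  have hsum2 : ∑ x ∈ Bf, ∑ y ∈ Bf, P (Ev x ∩ Ev y)
      ≤ ENNReal.ofReal ((Bf.card : ℝ) * (αr * E0)) := by
    have hper : ∀ x ∈ Bf, ∑ y ∈ Bf, P (Ev x ∩ Ev y) ≤ ENNReal.ofReal (αr * E0) := by
      intro x hx
      rw [← Finset.add_sum_erase Bf _ hx, Set.inter_self, hEvP x]
      have hoffE : ∑ y ∈ Bf.erase x, P (Ev x ∩ Ev y)
          ≤ ENNReal.ofReal (αr * (8^d * K)) := by
        calc ∑ y ∈ Bf.erase x, P (Ev x ∩ Ev y)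
            ≤ ∑ y ∈ Bf.erase x, ENNReal.ofReal (αr * (p*q)^(Nat.log 2 (tt x y)+1)) := by
              apply Finset.sum_le_sum
              intro y hy
              obtain ⟨hyx, hyB⟩ := Finset.mem_erase.1 hy
              exact hpair x hx y hyB (Ne.symm hyx)
          _ = ENNReal.ofReal (∑ y ∈ Bf.erase x, αr * (p*q)^(Nat.log 2 (tt x y)+1)) :=
              (ENNReal.ofReal_sum_of_nonneg (fun y _ =>
                mul_nonneg hαrpos.le (pow_nonneg hpqpos.le _))).symm
          _ ≤ ENNReal.ofReal (αr * (8^d * K)) := by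
              apply ENNReal.ofReal_le_ofReal
              rw [← Finset.mul_sum]
              exact mul_le_mul_of_nonneg_left (hoff x hx) hαrpos.le
      calc ENNReal.ofReal αr + ∑ y ∈ Bf.erase x, P (Ev x ∩ Ev y)
          ≤ ENNReal.ofReal αr + ENNReal.ofReal (αr * (8^d * K)) := add_le_add le_rfl hoffE
        _ = ENNReal.ofReal (αr * E0) := by
            rw [← ENNReal.ofReal_add hαrpos.le
              (mul_nonneg hαrpos.le (mul_nonneg (by positivity) hKpos.le))]
            congr 1
            rw [hE0]
            ring
    calc ∑ x ∈ Bf, ∑ y ∈ Bf, P (Ev x ∩ Ev y) ≤ ∑ x ∈ Bf, ENNReal.ofReal (αr * E0) :=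
        Finset.sum_le_sum hper
      _ = ENNReal.ofReal ((Bf.card : ℝ) * (αr * E0)) := by
          rw [Finset.sum_const, nsmul_eq_mul,
            ENNReal.ofReal_mul (Nat.cast_nonneg Bf.card), ENNReal.ofReal_natCast]
  -- Chung-Erdos
  have hcardpos : (0:ℝ) < (Bf.card : ℝ) := by
    rw [hBcardNat]
    positivity
  set N : ℝ := (Bf.card : ℝ) * αr with hN
  have hNpos : 0 < N := by rw [hN]; exact mul_pos hcardpos hαrpos
  set D : ℝ := (Bf.card : ℝ) * (αr * E0) with hD
  have hDpos : 0 < D := by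
    rw [hD]; exact mul_pos hcardpos (mul_pos hαrpos hE0pos)
  have hCE := FP13.chung_erdos P Bf Ev hEvMeas
  have hUT : P (⋃ x ∈ Bf, Ev x) ≤ P T := measure_mono (Set.iUnion₂_subset hEvT)
  have step : ENNReal.ofReal (N^2 / D) * ENNReal.ofReal D ≤ P T * ENNReal.ofReal D := by
    rw [← ENNReal.ofReal_mul (div_nonneg (sq_nonneg N) hDpos.le), div_mul_cancel₀ _ hDpos.ne']
    calc ENNReal.ofReal (N^2) = ENNReal.ofReal N ^ 2 := ENNReal.ofReal_pow hNpos.le 2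
      _ = (∑ x ∈ Bf, P (Ev x)) ^ 2 := by rw [hsum1, hN]
      _ ≤ P (⋃ x ∈ Bf, Ev x) * ∑ x ∈ Bf, ∑ y ∈ Bf, P (Ev x ∩ Ev y) := hCE
      _ ≤ P T * ENNReal.ofReal D := by
          apply mul_le_mul' hUT
          rw [hD]
          exact hsum2
  have key : ENNReal.ofReal (N / E0) ≤ P T := by
    have hD0 : ENNReal.ofReal D ≠ 0 := by
      simp only [ne_eq, ENNReal.ofReal_eq_zero, not_le]
      exact hDpos
    have h1 := (ENNReal.mul_le_mul_iff_left hD0 ENNReal.ofReal_ne_top).1 step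
    have h2 : N^2 / D = N / E0 := by
      rw [hN, hD, pow_two]
      rw [show (Bf.card : ℝ) * αr * ((Bf.card : ℝ) * αr) = ((Bf.card : ℝ) * αr) * ((Bf.card : ℝ) * αr) by ring]
      rw [show (Bf.card : ℝ) * (αr * E0) = ((Bf.card : ℝ) * αr) * E0 by ring]
      rw [mul_div_mul_left _ _ (mul_pos hcardpos hαrpos).ne']
    rwa [h2] at h1
  -- value of N
  have hqsplit : q ^ n = q ^ m * q ^ (n - m) := by
    rw [← pow_add]
    congr 1
    omega
  have hexp : d + (m - 1) * d = m * d := by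
    have h1 : m - 1 + 1 = m := Nat.succ_pred_eq_of_pos hm
    calc d + (m-1)*d = ((m-1)+1)*d := by ring
    _ = m * d := by rw [h1]
  have hNval : (2:ℝ)^d * N = lam^m * q^(n-m) := by
    rw [hN, hαr, hBcardNat, hqsplit]
    push_cast
    calc (2:ℝ)^d * (2^((m-1)*d) * (p^m * (q^m * q^(n-m))))
        = (2:ℝ)^(d + (m-1)*d) * p^m * q^m * q^(n-m) := by rw [pow_add]; ring
      _ = (2:ℝ)^(m*d) * p^m * q^m * q^(n-m) := by rw [hexp]
      _ = ((2:ℝ)^d)^m * p^m * q^m * q^(n-m) := by rw [← pow_mul, mul_comm m d]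
      _ = lam^m * q^(n-m) := by rw [hlam, mul_pow, mul_pow]
  have hlampos : 0 < lam := lt_of_lt_of_le one_pos hlam1
  constructor
  · -- supercritical
    intro hsup
    have hLamEq : Lam = lam - 1 := by rw [hLam, if_pos hsup]
    have hlamm : lam ≤ lam ^ m := le_self_pow₀ hlam1 (by omega)
    have hKmul : K * (lam - 1) = lam^m - 1 := by rw [hK]; exact geom_sum_mul lam m
    have hmain : min 1 Lam / (1+8^d) * (q^(n-m) * E0) ≤ lam^m * q^(n-m) := by
      rw [div_mul_eq_mul_div, div_le_iff₀ h8pos]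
      have hQ : (0:ℝ) < q^(n-m) := by positivity
      have h8d : (0:ℝ) < 8^d := by positivity
      have hmu2 : min 1 Lam ≤ lam - 1 := le_trans (min_le_right _ _) (le_of_eq hLamEq)
      have hs1 : min 1 Lam * (q^(n-m) * E0)
          = min 1 Lam * q^(n-m) + 8^d*(min 1 Lam*K)*q^(n-m) := by rw [hE0]; ring
      have h2 : min 1 Lam * q^(n-m) ≤ lam^m * q^(n-m) := by
        apply mul_le_mul_of_nonneg_right _ hQ.le
        calc min 1 Lam ≤ lam - 1 := hmu2
        _ ≤ lam^m := by linarith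
      have h3 : min 1 Lam * K ≤ lam^m - 1 := by
        calc min 1 Lam * K ≤ (lam-1)*K := mul_le_mul_of_nonneg_right hmu2 hKpos.le
        _ = lam^m - 1 := by rw [← hKmul]; ring
      have h4 : 8^d*(min 1 Lam*K)*q^(n-m) ≤ 8^d*lam^m*q^(n-m) := by
        apply mul_le_mul_of_nonneg_right _ hQ.le
        apply mul_le_mul_of_nonneg_left _ h8d.le
        calc min 1 Lam * K ≤ lam^m - 1 := h3
        _ ≤ lam^m := by linarith
      calc min 1 Lam * (q^(n-m)*E0) = min 1 Lam*q^(n-m) + 8^d*(min 1 Lam*K)*q^(n-m) := hs1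
      _ ≤ lam^m*q^(n-m) + 8^d*lam^m*q^(n-m) := add_le_add h2 h4
      _ = lam^m*q^(n-m)*(1+8^d) := by ring
    refine le_trans (ENNReal.ofReal_le_ofReal ?_) key
    rw [le_div_iff₀ hE0pos]
    calc ((2:ℝ)^d)⁻¹ * min 1 Lam / (1+8^d) * q^(n-m) * E0
        = ((2:ℝ)^d)⁻¹ * (min 1 Lam/(1+8^d) * (q^(n-m)*E0)) := by ring
      _ ≤ ((2:ℝ)^d)⁻¹ * (lam^m * q^(n-m)) := mul_le_mul_of_nonneg_left hmain (by positivity)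
      _ = N := by rw [← hNval, inv_mul_cancel_left₀ (ne_of_gt h2dpos)]
  · -- critical
    intro hcrit
    have hlam_eq : lam = 1 := hcrit
    have hKm : K = m := by rw [hK]; simp [hlam_eq]
    have hm1 : (1:ℝ) ≤ (m:ℝ) := by exact_mod_cast hm
    have hmpos : (0:ℝ) < (m:ℝ) := by linarith
    have hE0m : E0 ≤ (1+8^d) * m := by
      rw [hE0, hKm]
      have h8d : (0:ℝ) < 8^d := by positivity
      nlinarith
    have hmain : min 1 Lam / (1+8^d) * ((m:ℝ)⁻¹ * q^(n-m) * E0) ≤ q^(n-m) := by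
      have hmu1 : min 1 Lam ≤ 1 := min_le_left _ _
      have hmupos : 0 < min 1 Lam := lt_min one_pos hLampos
      calc min 1 Lam / (1+8^d) * ((m:ℝ)⁻¹ * q^(n-m) * E0)
          ≤ min 1 Lam / (1+8^d) * ((m:ℝ)⁻¹ * q^(n-m) * ((1+8^d)*m)) := by
            apply mul_le_mul_of_nonneg_left _ (by positivity)
            apply mul_le_mul_of_nonneg_left hE0m (by positivity)
        _ = min 1 Lam * q^(n-m) := by field_simp
        _ ≤ 1 * q^(n-m) := mul_le_mul_of_nonneg_right hmu1 (by positivity)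
        _ = q^(n-m) := one_mul _
    have hN2 : (2:ℝ)^d * N = q^(n-m) := by rw [hNval, hlam_eq, one_pow, one_mul]
    refine le_trans (ENNReal.ofReal_le_ofReal ?_) key
    rw [le_div_iff₀ hE0pos]
    calc ((2:ℝ)^d)⁻¹ * min 1 Lam / (1+8^d) * ((m:ℝ))⁻¹ * q^(n-m) * E0
        = ((2:ℝ)^d)⁻¹ * (min 1 Lam/(1+8^d) * ((m:ℝ)⁻¹ * q^(n-m) * E0)) := by ring
      _ ≤ ((2:ℝ)^d)⁻¹ * q^(n-m) := mul_le_mul_of_nonneg_left hmain (by positivity)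
      _ = N := by rw [← hN2, inv_mul_cancel_left₀ (ne_of_gt h2dpos)]
end
end

section
/- Let d ≥ 1 and let p, q ∈ (2^{−d}, 1) satisfy 2^d p q ≥ 1. Then there exists a constant C > 0 depending only on d, p, q such that for every 1 ≤ m ≤ n and every nonempty set A ⊆ Δ_n := [−2^{n−1}, 2^{n−1})^d ∩ ℤ^d, P((Q_d(p;m) + Q̂_d(q;n)) ∩ A ≠ ∅) ≤ C·q^{n − max(m, log₂(diam(A) ∨ 1))}. -/
open MeasureTheory ProbabilityTheory Set Pointwise
open scoped ENNReal Classical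

noncomputable section

lemma int_ediv_ediv (a : ℤ) (ha : 0 ≤ a) (s t : ℕ) : a / 2^s / 2^t = a / 2^(s+t) := by
  obtain ⟨b, rfl⟩ := Int.eq_ofNat_of_zero_le ha
  rw [show ((2:ℤ)^s) = ((2^s : ℕ) : ℤ) by push_cast; ring,
      show ((2:ℤ)^t) = ((2^t : ℕ) : ℤ) by push_cast; ring,
      show ((2:ℤ)^(s+t)) = ((2^(s+t) : ℕ) : ℤ) by push_cast; ring]
  norm_cast
  simp [Nat.div_div_eq_div_mul, pow_add]

lemma zdist_coord {d : ℕ} (x y : Zd d) (i : Fin d) : |((x i : ℝ)) - y i| ≤ zdist x y := by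
  rw [zdist, ← Real.sqrt_sq_eq_abs]
  apply Real.sqrt_le_sqrt
  calc ((x i : ℝ) - y i)^2 = ((x i - y i : ℤ) : ℝ)^2 := by push_cast; ring
    _ ≤ _ := Finset.single_le_sum (f := fun j => ((x j - y j : ℤ) : ℝ)^2)
        (fun j _ => by positivity) (Finset.mem_univ i)

lemma zdist_bound {d n : ℕ} (x y : Zd d) (hx : ∀ i, -(2:ℤ)^(n-1) ≤ x i ∧ x i < (2:ℤ)^(n-1))
    (hy : ∀ i, -(2:ℤ)^(n-1) ≤ y i ∧ y i < (2:ℤ)^(n-1)) :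
    zdist x y ≤ Real.sqrt (d * ((2:ℝ)^(n+1))^2) := by
  rw [zdist]
  apply Real.sqrt_le_sqrt
  have key : ∀ i : Fin d, ((x i - y i : ℤ) : ℝ)^2 ≤ ((2:ℝ)^(n+1))^2 := by
    intro i
    have h1 := (hx i).1; have h2 := (hx i).2
    have h3 := (hy i).1; have h4 := (hy i).2
    have hn : (2:ℤ)^(n-1) ≤ 2^n := pow_le_pow_right₀ (by norm_num) (Nat.sub_le n 1)
    have l1 : -(2:ℤ)^(n+1) ≤ x i - y i := by rw [pow_succ]; linarith
    have l2 : x i - y i ≤ (2:ℤ)^(n+1) := by rw [pow_succ]; linarith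
    have hb : |((x i - y i : ℤ) : ℝ)| ≤ (2:ℝ)^(n+1) := by
      rw [abs_le]; constructor
      · exact_mod_cast l1
      · exact_mod_cast l2
    calc ((x i - y i : ℤ) : ℝ)^2 = |((x i - y i : ℤ) : ℝ)|^2 := (sq_abs _).symm
      _ ≤ ((2:ℝ)^(n+1))^2 := pow_le_pow_left₀ (abs_nonneg _) hb 2
  calc ∑ i, ((x i - y i : ℤ) : ℝ)^2 ≤ ∑ _i : Fin d, ((2:ℝ)^(n+1))^2 :=
        Finset.sum_le_sum fun i _ => key i
    _ = d * ((2:ℝ)^(n+1))^2 := by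
        rw [Finset.sum_const, Finset.card_univ, Fintype.card_fin, nsmul_eq_mul]

/-- Upper bound for the hitting probability of the Minkowski sum of two
independent fractal percolations when `2^d p q ≥ 1`. -/
theorem statement14 (d : ℕ) (hd : 1 ≤ d) (p q : ℝ)
    (hp : p ∈ Set.Ioo (((2:ℝ) ^ d)⁻¹) 1) (hq : q ∈ Set.Ioo (((2:ℝ) ^ d)⁻¹) 1)
    (hpq : 1 ≤ 2 ^ d * p * q) :
    ∃ C : ℝ, 0 < C ∧
      ∀ (m n : ℕ), 1 ≤ m → m ≤ n →
      ∀ (Ω : Type) (mΩ : MeasurableSpace Ω) (P : Measure Ω),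
        IsProbabilityMeasure P →
      ∀ X : TreeEdge d m ⊕ TreeEdge d n → Ω → Bool,
        (∀ e, Measurable (X e)) →
        iIndepFun X P →
        (∀ e, P {ω | X (Sum.inl e) ω = true} = ENNReal.ofReal p) →
        (∀ e, P {ω | X (Sum.inr e) ω = true} = ENNReal.ofReal q) →
      ∀ A : Set (Zd d), A.Nonempty → A ⊆ box d n →
        P {ω | ((percCluster d m (fun e => X (Sum.inl e) ω) +
                 percCluster d n fun e => X (Sum.inr e) ω) ∩ A).Nonempty} ≤
          ENNReal.ofReal (C *
            q ^ ((n : ℝ) - max (m : ℝ) (Real.logb 2 (max (zdiam A) 1)))) := by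
  obtain ⟨hq0', hq1⟩ := hq
  have hq0 : 0 < q := lt_trans (by positivity) hq0'
  refine ⟨4^d / q, by positivity, ?_⟩
  intro m n hm hmn Ω mΩ P hP X hX hind hXp hXq A hA hAbox
  obtain ⟨a₀, ha₀⟩ := hA
  set D := zdiam A with hD
  have hbdd : BddAbove {r : ℝ | ∃ x ∈ A, ∃ y ∈ A, r = zdist x y} := by
    refine ⟨Real.sqrt (d * ((2:ℝ)^(n+1))^2), ?_⟩
    rintro r ⟨x, hx, y, hy, rfl⟩
    exact zdist_bound x y (hAbox hx) (hAbox hy)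
  have hdistD : ∀ x ∈ A, ∀ y ∈ A, zdist x y ≤ D :=
    fun x hx y hy => le_csSup hbdd ⟨x, hx, y, hy, rfl⟩
  set lgb := Real.logb 2 (max D 1) with hlgb
  have hlgb0 : 0 ≤ lgb := Real.logb_nonneg (by norm_num) (le_max_right _ _)
  set K := ⌈lgb⌉₊ with hKdef
  have hDK : D ≤ (2:ℝ)^K := by
    calc D ≤ max D 1 := le_max_left _ _
      _ = (2:ℝ)^lgb := (Real.rpow_logb (by norm_num) (by norm_num) (by positivity)).symm
      _ ≤ (2:ℝ)^(K:ℝ) := Real.rpow_le_rpow_of_exponent_le (by norm_num) (Nat.le_ceil _)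
      _ = (2:ℝ)^K := Real.rpow_natCast 2 K
  have hKlgb : (K:ℝ) ≤ lgb + 1 := le_of_lt (Nat.ceil_lt_add_one hlgb0)
  set M := max (m:ℝ) lgb with hMdef
  set L := max m K with hLdef
  have hLM : (L:ℝ) ≤ M + 1 := by
    rw [hLdef, Nat.cast_max]
    apply max_le
    · have : (m:ℝ) ≤ M := le_max_left _ _; linarith
    · have : lgb ≤ M := le_max_right _ _; linarith
  by_cases hn : L ≤ n
  case neg =>
    -- trivial bound
    have hKn : n < K := by
      rcases lt_max_iff.mp (not_le.mp hn) with h | h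
      · omega
      · exact h
    have hMn : (n:ℝ) ≤ M := by
      have : (n:ℝ) + 1 ≤ (K:ℝ) := by exact_mod_cast hKn
      have : (n:ℝ) ≤ lgb := by linarith
      calc (n:ℝ) ≤ lgb := this
        _ ≤ M := le_max_right _ _
    have h1q : 1 ≤ q ^ ((n:ℝ) - M) := by
      have := Real.rpow_le_rpow_of_exponent_ge hq0 hq1.le
        (show (n:ℝ) - M ≤ 0 by linarith)
      rwa [Real.rpow_zero] at this
    have hC1 : 1 ≤ (4:ℝ)^d / q := by
      rw [one_le_div hq0]
      calc q ≤ 1 := hq1.le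
        _ ≤ (4:ℝ)^d := one_le_pow₀ (by norm_num)
    calc P _ ≤ 1 := prob_le_one
      _ = ENNReal.ofReal 1 := ENNReal.ofReal_one.symm
      _ ≤ _ := by
          apply ENNReal.ofReal_le_ofReal
          calc (1:ℝ) = 1 * 1 := (one_mul 1).symm
            _ ≤ (4^d / q) * q ^ ((n:ℝ) - M) :=
                mul_le_mul hC1 h1q zero_le_one (by positivity)
  case pos =>
    set r := n - L with hrdef
    have hrL : r + L = n := Nat.sub_add_cancel hn
    -- edges of the path above the depth-(n-L) ancestor coded by v
    have hjr : ∀ j : Fin r, (j:ℕ) < n := fun j => lt_of_lt_of_le j.2 (Nat.sub_le n L)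
    set edge : Zd d → Fin r → TreeEdge d n :=
      fun v j => (⟨(j:ℕ), hjr j⟩, fun i => v i / 2^(r - ((j:ℕ)+1))) with hedge
    set S : Zd d → Finset (TreeEdge d m ⊕ TreeEdge d n) :=
      fun v => Finset.image (fun j => Sum.inr (edge v j)) Finset.univ with hS
    set G : Zd d → Set Ω := fun v => ⋂ e ∈ S v, X e ⁻¹' ({true} : Set Bool) with hG
    have hinj : ∀ v, Function.Injective
        (fun j : Fin r => (Sum.inr (edge v j) : TreeEdge d m ⊕ TreeEdge d n)) := by
      intro v j1 j2 h
      simp only [hedge, Sum.inr.injEq, Prod.mk.injEq, Fin.mk.injEq] at h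
      exact Fin.ext h.1
    have hGmeas : ∀ v, P (G v) = (ENNReal.ofReal q)^r := by
      intro v
      rw [hG]
      rw [hind.measure_inter_preimage_eq_mul (S v)
        (sets := fun _ => ({true} : Set Bool)) (fun i _ => measurableSet_singleton true)]
      rw [hS, Finset.prod_image (fun j _ k _ h => hinj v h)]
      have : ∀ j : Fin r, P (X (Sum.inr (edge v j)) ⁻¹' {true}) = ENNReal.ofReal q := by
        intro j
        rw [show X (Sum.inr (edge v j)) ⁻¹' {true} = {ω | X (Sum.inr (edge v j)) ω = true} by
          ext ω; simp]
        exact hXq _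
      rw [Finset.prod_congr rfl (fun j _ => this j), Finset.prod_const, Finset.card_univ,
        Fintype.card_fin]
    -- the finset of candidate codes
    set lo : Fin d → ℤ := fun i => max 0 (a₀ i + 2^(n-1) - 2^K - 2^(m-1)) with hlo
    set W : Finset (Zd d) :=
      Fintype.piFinset (fun i => Finset.Icc (lo i / 2^L) (lo i / 2^L + 3)) with hW
    have hincl : {ω | ((percCluster d m (fun e => X (Sum.inl e) ω) +
                 percCluster d n fun e => X (Sum.inr e) ω) ∩ A).Nonempty}
        ⊆ ⋃ v ∈ W, G v := by
      rintro ω ⟨a, ha_add, haA⟩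
      rw [Set.mem_add] at ha_add
      obtain ⟨x, hx, y, hy, hxy⟩ := ha_add
      set v : Zd d := fun i => (y i + 2^(n-1)) / 2^L with hv
      have hy0 : ∀ i, (0:ℤ) ≤ y i + 2^(n-1) := fun i => by linarith [(hy.1 i).1]
      have hvW : v ∈ W := by
        rw [hW, Fintype.mem_piFinset]
        intro i
        rw [Finset.mem_Icc]
        have hyi : y i = a i - x i := by
          have := congrFun hxy i; simp at this; linarith
        have habs : |a i - a₀ i| ≤ (2:ℤ)^K := by
          have h1 : |((a i : ℝ)) - a₀ i| ≤ zdist a a₀ := zdist_coord a a₀ i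
          have h2 : zdist a a₀ ≤ D := hdistD a haA a₀ ha₀
          have h3 : |((a i - a₀ i : ℤ) : ℝ)| ≤ ((2:ℝ))^K := by push_cast; linarith
          exact_mod_cast h3
        have hxlo := (hx.1 i).1
        have hxhi := (hx.1 i).2
        have habs1 := (abs_le.mp habs).1
        have habs2 := (abs_le.mp habs).2
        have hKL : (2:ℤ)^K ≤ 2^L := pow_le_pow_right₀ (by norm_num) (le_max_right m K)
        have hmL : (2:ℤ)^m ≤ 2^L := pow_le_pow_right₀ (by norm_num) (le_max_left m K)
        have hm2 : (2:ℤ)^(m-1) * 2 = 2^m := by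
          rw [← pow_succ]; congr 1; omega
        have hlower : lo i ≤ y i + 2^(n-1) := by
          rw [hlo]
          apply max_le (hy0 i)
          rw [hyi]; linarith
        have hupper : y i + 2^(n-1) ≤ lo i + 3 * 2^L := by
          have hlo_ge : a₀ i + 2^(n-1) - 2^K - 2^(m-1) ≤ lo i := le_max_right _ _
          rw [hyi]; linarith
        constructor
        · exact Int.ediv_le_ediv (by positivity) hlower
        · calc v i ≤ (lo i + 3 * 2^L) / 2^L := Int.ediv_le_ediv (by positivity) hupper
            _ = lo i / 2^L + 3 := Int.add_mul_ediv_right _ 3 (by positivity)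
      refine Set.mem_biUnion hvW ?_
      rw [hG]
      simp only [hS, Set.mem_iInter, Finset.mem_image, Finset.mem_univ, true_and]
      rintro e ⟨j, rfl⟩
      have hkey : edge v j = (⟨(j:ℕ), hjr j⟩, ancestorCode d n ((j:ℕ)+1) y) := by
        rw [hedge]
        refine Prod.ext rfl ?_
        funext i
        show v i / 2^(r - ((j:ℕ)+1)) = (y i + 2^(n-1)) / 2^(n - ((j:ℕ)+1))
        rw [hv]
        rw [int_ediv_ediv _ (hy0 i) L (r - ((j:ℕ)+1))]
        congr 2
        omega
      rw [Set.mem_preimage, hkey]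
      have := hy.2 ⟨(j:ℕ), hjr j⟩
      simpa using this
    -- put it together
    have hcard : W.card = 4^d := by
      rw [hW, Fintype.card_piFinset]
      calc ∏ i : Fin d, (Finset.Icc (lo i / 2^L) (lo i / 2^L + 3)).card
          = ∏ _i : Fin d, 4 := Finset.prod_congr rfl (fun i _ => by
            rw [Int.card_Icc]; omega)
        _ = 4^d := by rw [Finset.prod_const, Finset.card_univ, Fintype.card_fin]
    calc P _ ≤ P (⋃ v ∈ W, G v) := measure_mono hincl
      _ ≤ ∑ v ∈ W, P (G v) := measure_biUnion_finset_le W G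
      _ = ∑ _v ∈ W, (ENNReal.ofReal q)^r := Finset.sum_congr rfl (fun v _ => hGmeas v)
      _ = (W.card : ℝ≥0∞) * (ENNReal.ofReal q)^r := by
          rw [Finset.sum_const, nsmul_eq_mul]
      _ = ENNReal.ofReal ((4:ℝ)^d * q^r) := by
          rw [hcard, ENNReal.ofReal_mul (by positivity), ← ENNReal.ofReal_pow hq0.le]
          congr 1
          rw [show ((4:ℝ)^d) = (((4^d : ℕ)):ℝ) by push_cast; ring, ENNReal.ofReal_natCast]
      _ ≤ _ := by
          apply ENNReal.ofReal_le_ofReal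
          have hqr : q^r = q^((n:ℝ) - (L:ℝ)) := by
            rw [← Real.rpow_natCast q r, hrdef]
            congr 1
            push_cast [Nat.cast_sub hn]
            ring
          have hstep : q^((n:ℝ) - (L:ℝ)) ≤ q^((n:ℝ) - M - 1) :=
            Real.rpow_le_rpow_of_exponent_ge hq0 hq1.le (by linarith)
          have hsub : q^((n:ℝ) - M - 1) = q^((n:ℝ) - M) / q := by
            rw [show (n:ℝ) - M - 1 = ((n:ℝ) - M) - 1 by ring,
              Real.rpow_sub hq0, Real.rpow_one]
          calc (4:ℝ)^d * q^r = 4^d * q^((n:ℝ) - (L:ℝ)) := by rw [hqr]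
            _ ≤ 4^d * q^((n:ℝ) - M - 1) := by
                apply mul_le_mul_of_nonneg_left hstep (by positivity)
            _ = 4^d / q * q^((n:ℝ) - M) := by rw [hsub]; ring
end
end

section
/- Let d ≥ 1. For each k ≥ 1 let Z_k and Ẑ_k be (deterministic) families of dyadic subcubes of [−1/2,1/2)^d of side length 2^{−k} such that every cube of Z_{k+1} is contained in a cube of Z_k (and likewise for Ẑ_{k+1}, Ẑ_k). Set D_k := (⋃_{Q∈Z_k} 2^k Q) ∩ ℤ^d, D := ⋂_{k≥1} ⋃_{Q∈Z_k} closure(Q), and similarly D̂_k, D̂. For a closed set Λ ⊆ [−1/2,1/2]^d and k ≥ 0, let T_k(Λ) := ⋃ {x + [−2^{1−k}, 2^{1−k}]^d : x ∈ 2^{−k}ℤ^d, (x + [−2^{1−k}, 2^{1−k}]^d) ∩ Λ ≠ ∅}. Then (D + D̂) ∩ Λ ≠ ∅ if and only if for every k ≥ 1, (D_k + D̂_k) ∩ 2^k T_k(Λ) ≠ ∅. -/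
open MeasureTheory ProbabilityTheory Set Pointwise
open scoped ENNReal Classical

noncomputable section

/-- Points of `ℝ^d`. -/
abbrev Rv (d : ℕ) := Fin d → ℝ

/-- The closed dyadic cube of side `2^(-k)` inside `[-1/2, 1/2]^d` whose coordinatewise
binary code is `v` (with `0 ≤ v i < 2^k`). -/
def dyadicCubeR (d k : ℕ) (v : Zd d) : Set (Rv d) :=
  {x | ∀ i, -(1/2 : ℝ) + (v i : ℝ) / 2 ^ k ≤ x i ∧ x i ≤ -(1/2 : ℝ) + ((v i : ℝ) + 1) / 2 ^ k}

/-- The cube `y/2^k + [-2^(1-k), 2^(1-k)]^d` around the grid point `y/2^k ∈ 2^(-k)ℤ^d`. -/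
def gridCube (d k : ℕ) (y : Zd d) : Set (Rv d) :=
  {x | ∀ i, (y i : ℝ) / 2 ^ k - (2:ℝ) ^ ((1:ℤ) - k) ≤ x i ∧
        x i ≤ (y i : ℝ) / 2 ^ k + (2:ℝ) ^ ((1:ℤ) - k)}

/-- The cube neighbourhood `T_k(Λ)`: the union of the cubes `x + [-2^(1-k), 2^(1-k)]^d`,
`x ∈ 2^(-k)ℤ^d`, meeting `Λ`. -/
def Tk (d k : ℕ) (Λ : Set (Rv d)) : Set (Rv d) :=
  ⋃ y ∈ {y : Zd d | (gridCube d k y ∩ Λ).Nonempty}, gridCube d k y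

/-- The lattice set `D_k = (⋃_{Q ∈ Z_k} 2^k Q) ∩ ℤ^d` associated to a family of depth-`k`
dyadic cubes given by their codes: the cube of code `v` rescaled by `2^k` contains the
single lattice point `v - 2^(k-1)·(1,…,1)`. -/
def latticeSet (d k : ℕ) (Z : Set (Zd d)) : Set (Zd d) :=
  {x | ∃ v ∈ Z, x = fun i => v i - 2 ^ (k - 1)}

lemma aux_two_zpow (k : ℕ) : (2:ℝ) ^ ((1:ℤ) - k) = 2 / 2 ^ k := by
  rw [zpow_sub₀ (by norm_num : (2:ℝ) ≠ 0), zpow_one, zpow_natCast]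

lemma aux_cube_compact (d k : ℕ) (v : Zd d) : IsCompact (dyadicCubeR d k v) := by
  have h : dyadicCubeR d k v = Set.pi Set.univ
      (fun i => Set.Icc (-(1/2 : ℝ) + (v i : ℝ) / 2 ^ k) (-(1/2 : ℝ) + ((v i : ℝ) + 1) / 2 ^ k)) := by
    ext x
    simp only [dyadicCubeR, Set.mem_setOf_eq, Set.mem_pi, Set.mem_univ, Set.mem_Icc, true_implies]
  rw [h]
  exact isCompact_univ_pi fun i => isCompact_Icc

lemma aux_cube_nest (d k : ℕ) (v : Zd d) :
    dyadicCubeR d (k+1) v ⊆ dyadicCubeR d k (fun i => v i / 2) := by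
  intro x hx i
  obtain ⟨h1, h2⟩ := hx i
  have hZ1 : 2 * (v i / 2) ≤ v i := by omega
  have hZ2 : v i + 1 ≤ 2 * (v i / 2) + 2 := by omega
  have hp : (0:ℝ) < 2 ^ k := by positivity
  have hps : (2:ℝ) ^ (k+1) = 2 ^ k * 2 := by rw [pow_succ]
  have hc1 : (2:ℝ) * ((v i / 2 : ℤ) : ℝ) ≤ ((v i : ℤ) : ℝ) := by exact_mod_cast hZ1
  have hc2 : ((v i : ℤ) : ℝ) + 1 ≤ 2 * ((v i / 2 : ℤ) : ℝ) + 2 := by exact_mod_cast hZ2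
  rw [hps] at h1 h2
  constructor
  · have : ((v i / 2 : ℤ) : ℝ) / 2 ^ k ≤ ((v i : ℤ) : ℝ) / (2 ^ k * 2) := by
      rw [div_le_div_iff₀ hp (by positivity)]; nlinarith
    linarith
  · have h3 : ((v i : ℤ) : ℝ) / (2 ^ k * 2) + 1 / (2 ^ k * 2) ≤ (((v i / 2 : ℤ) : ℝ) + 1) / 2 ^ k := by
      rw [← add_div, div_le_div_iff₀ (by positivity) hp]; nlinarith
    have h4 : ((v i : ℤ) : ℝ) / (2 ^ k * 2) + 1 / (2 ^ k * 2) = (((v i : ℤ) : ℝ) + 1) / (2 ^ k * 2) := by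
      ring
    linarith [h4 ▸ h3]


/-- For nested deterministic families of dyadic cubes `Z_k, Ẑ_k` with
limit sets `D, D̂` and discrete versions `D_k, D̂_k`, a closed set `Λ ⊆ [-1/2,1/2]^d` meets
`D + D̂` iff for every `k ≥ 1` the rescaled neighbourhood `2^k T_k(Λ)` meets `D_k + D̂_k`. -/
theorem statement17 (d : ℕ) (hd : 1 ≤ d) (Z W : ℕ → Set (Zd d))
    (hZvalid : ∀ k, 1 ≤ k → ∀ v ∈ Z k, ∀ i, 0 ≤ v i ∧ v i < 2 ^ k)
    (hWvalid : ∀ k, 1 ≤ k → ∀ v ∈ W k, ∀ i, 0 ≤ v i ∧ v i < 2 ^ k)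
    (hZnest : ∀ k, 1 ≤ k → ∀ v ∈ Z (k + 1), (fun i => v i / 2) ∈ Z k)
    (hWnest : ∀ k, 1 ≤ k → ∀ v ∈ W (k + 1), (fun i => v i / 2) ∈ W k)
    (Λ : Set (Rv d)) (hΛc : IsClosed Λ) (hΛs : Λ ⊆ {x | ∀ i, |x i| ≤ 1/2}) :
    (((⋂ k ∈ {k : ℕ | 1 ≤ k}, ⋃ v ∈ Z k, dyadicCubeR d k v) +
      (⋂ k ∈ {k : ℕ | 1 ≤ k}, ⋃ v ∈ W k, dyadicCubeR d k v)) ∩ Λ).Nonempty ↔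
    ∀ k, 1 ≤ k →
      ∃ z ∈ latticeSet d k (Z k) + latticeSet d k (W k),
        (fun i => (z i : ℝ)) ∈ (2:ℝ) ^ k • Tk d k Λ := by
  constructor
  · -- forward direction
    rintro ⟨p, hp, hpΛ⟩
    rw [Set.mem_add] at hp
    obtain ⟨a, ha, b, hb, hab⟩ := hp
    intro k hk
    have hpow : (2:ℝ) ^ (k-1) * 2 = 2 ^ k := by
      rw [← pow_succ, Nat.sub_add_cancel hk]
    have hposk : (0:ℝ) < 2 ^ k := by positivity
    obtain ⟨v, hv, hav⟩ := Set.mem_iUnion₂.mp (Set.mem_iInter₂.mp ha k hk)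
    obtain ⟨w, hw, hbw⟩ := Set.mem_iUnion₂.mp (Set.mem_iInter₂.mp hb k hk)
    refine ⟨(fun i => v i - 2^(k-1)) + (fun i => w i - 2^(k-1)),
      Set.add_mem_add ⟨v, hv, rfl⟩ ⟨w, hw, rfl⟩, ?_⟩
    rw [mem_smul_set_iff_inv_smul_mem₀ (by positivity : (2:ℝ)^k ≠ 0)]
    refine Set.mem_iUnion₂.mpr ⟨fun i => v i - 2^(k-1) + (w i - 2^(k-1)), ⟨p, ?_, hpΛ⟩, ?_⟩
    · -- p ∈ gridCube
      intro i
      obtain ⟨ha1, ha2⟩ := hav i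
      obtain ⟨hb1, hb2⟩ := hbw i
      rw [aux_two_zpow]
      have hpi : p i = a i + b i := by rw [← hab]; rfl
      push_cast
      have e1 : ((v i:ℝ) - 2^(k-1) + ((w i:ℝ) - 2^(k-1))) / 2^k
          = (v i:ℝ)/2^k + (w i:ℝ)/2^k - (2^(k-1)*2)/2^k := by ring
      rw [hpow, div_self (ne_of_gt hposk)] at e1
      rw [e1]
      have hv1 : ((v i:ℝ)+1)/2^k = (v i:ℝ)/2^k + 1/2^k := add_div _ _ _
      have hw1 : ((w i:ℝ)+1)/2^k = (w i:ℝ)/2^k + 1/2^k := add_div _ _ _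
      have h2P : (2:ℝ)/2^k = 1/2^k + 1/2^k := by ring
      have h1P : (0:ℝ) ≤ 1/2^k := by positivity
      constructor <;> linarith [hpi]
    · -- scaled point ∈ gridCube
      intro i
      rw [aux_two_zpow]
      have e0 : (((2:ℝ)^k)⁻¹ • fun i => ((((fun i => v i - 2^(k-1)) + fun i => w i - 2^(k-1)) : Zd d) i : ℝ)) i
          = ((v i:ℝ) - 2^(k-1) + ((w i:ℝ) - 2^(k-1))) / 2^k := by
        simp only [Pi.smul_apply, Pi.add_apply, smul_eq_mul]
        push_cast
        rw [inv_mul_eq_div]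
      rw [e0]
      have h2 : (0:ℝ) < 2 / 2^k := by positivity
      push_cast
      constructor <;> linarith
  · -- reverse direction
    intro H
    have hΛne : Λ.Nonempty := by
      obtain ⟨z, _, hzT⟩ := H 1 le_rfl
      rw [mem_smul_set_iff_inv_smul_mem₀ (by positivity : (2:ℝ)^1 ≠ 0)] at hzT
      obtain ⟨u, hu, -⟩ := Set.mem_iUnion₂.mp hzT
      obtain ⟨lam, -, hlam⟩ := hu
      exact ⟨lam, hlam⟩
    have hfinZ : ∀ k, 1 ≤ k → (Z k).Finite := by
      intro k hk
      refine Set.Finite.subset (Set.Finite.pi (fun _ : Fin d => Set.finite_Icc (0:ℤ) (2^k - 1))) ?_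
      intro v hv
      simp only [Set.mem_pi, Set.mem_univ, Set.mem_Icc, true_implies]
      intro i
      have := hZvalid k hk v hv i
      omega
    have hfinW : ∀ k, 1 ≤ k → (W k).Finite := by
      intro k hk
      refine Set.Finite.subset (Set.Finite.pi (fun _ : Fin d => Set.finite_Icc (0:ℤ) (2^k - 1))) ?_
      intro v hv
      simp only [Set.mem_pi, Set.mem_univ, Set.mem_Icc, true_implies]
      intro i
      have := hWvalid k hk v hv i
      omega
    have hKZcomp : ∀ k, 1 ≤ k → IsCompact (⋃ v ∈ Z k, dyadicCubeR d k v) := fun k hk =>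
      (hfinZ k hk).isCompact_biUnion (fun v _ => aux_cube_compact d k v)
    have hKWcomp : ∀ k, 1 ≤ k → IsCompact (⋃ v ∈ W k, dyadicCubeR d k v) := fun k hk =>
      (hfinW k hk).isCompact_biUnion (fun v _ => aux_cube_compact d k v)
    have hKZnest : ∀ k, 1 ≤ k →
        (⋃ v ∈ Z (k+1), dyadicCubeR d (k+1) v) ⊆ ⋃ v ∈ Z k, dyadicCubeR d k v := by
      intro k hk x hx
      obtain ⟨v, hv, hxv⟩ := Set.mem_iUnion₂.mp hx
      exact Set.mem_iUnion₂.mpr ⟨_, hZnest k hk v hv, aux_cube_nest d k v hxv⟩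
    have hKWnest : ∀ k, 1 ≤ k →
        (⋃ v ∈ W (k+1), dyadicCubeR d (k+1) v) ⊆ ⋃ v ∈ W k, dyadicCubeR d k v := by
      intro k hk x hx
      obtain ⟨v, hv, hxv⟩ := Set.mem_iUnion₂.mp hx
      exact Set.mem_iUnion₂.mpr ⟨_, hWnest k hk v hv, aux_cube_nest d k v hxv⟩
    have key : ∀ k, 1 ≤ k → ∃ a ∈ ⋃ v ∈ Z k, dyadicCubeR d k v,
        ∃ b ∈ ⋃ v ∈ W k, dyadicCubeR d k v, Metric.infDist (a+b) Λ ≤ 4 / 2^k := by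
      intro k hk
      have hpow : (2:ℝ) ^ (k-1) * 2 = 2 ^ k := by
        rw [← pow_succ, Nat.sub_add_cancel hk]
      have hposk : (0:ℝ) < 2 ^ k := by positivity
      obtain ⟨z, hz, hzT⟩ := H k hk
      rw [Set.mem_add] at hz
      obtain ⟨x, hx, y, hy, hxy⟩ := hz
      obtain ⟨v, hv, rfl⟩ := hx
      obtain ⟨w, hw, rfl⟩ := hy
      subst hxy
      rw [mem_smul_set_iff_inv_smul_mem₀ (by positivity : (2:ℝ)^k ≠ 0)] at hzT
      obtain ⟨u, hu, hug⟩ := Set.mem_iUnion₂.mp hzT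
      obtain ⟨lam, hlamg, hlamΛ⟩ := hu
      have hmono : ∀ j : Fin d, (v j : ℝ)/2^k ≤ ((v j : ℝ)+1)/2^k := by
        intro j
        rw [div_le_div_iff₀ hposk hposk]
        nlinarith
      have hmonoW : ∀ j : Fin d, (w j : ℝ)/2^k ≤ ((w j : ℝ)+1)/2^k := by
        intro j
        rw [div_le_div_iff₀ hposk hposk]
        nlinarith
      refine ⟨fun i => -(1/2:ℝ) + (v i : ℝ) / 2^k,
        Set.mem_iUnion₂.mpr ⟨v, hv, fun i => ⟨le_refl _, by linarith [hmono i]⟩⟩,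
        fun i => -(1/2:ℝ) + (w i : ℝ) / 2^k,
        Set.mem_iUnion₂.mpr ⟨w, hw, fun i => ⟨le_refl _, by linarith [hmonoW i]⟩⟩, ?_⟩
      refine le_trans (Metric.infDist_le_dist_of_mem hlamΛ) ?_
      rw [dist_pi_le_iff (by positivity)]
      intro i
      rw [Real.dist_eq]
      obtain ⟨hg1, hg2⟩ := hug i
      obtain ⟨hl1, hl2⟩ := hlamg i
      rw [aux_two_zpow] at hg1 hg2 hl1 hl2
      have e0 : (((2:ℝ)^k)⁻¹ • fun i => ((((fun i => v i - 2^(k-1)) + fun i => w i - 2^(k-1)) : Zd d) i : ℝ)) i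
          = (v i:ℝ)/2^k + (w i:ℝ)/2^k - 1 := by
        simp only [Pi.smul_apply, Pi.add_apply, smul_eq_mul]
        push_cast
        rw [inv_mul_eq_div]
        have e1 : ((v i:ℝ) - 2^(k-1) + ((w i:ℝ) - 2^(k-1))) / 2^k
            = (v i:ℝ)/2^k + (w i:ℝ)/2^k - (2^(k-1)*2)/2^k := by ring
        rw [e1, hpow, div_self (ne_of_gt hposk)]
      rw [e0] at hg1 hg2
      have h42 : (4:ℝ)/2^k = 2/2^k + 2/2^k := by ring
      rw [abs_le]
      constructor <;> · simp only [Pi.add_apply]; linarith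
    set S : ℕ → Set (Rv d × Rv d) := fun n =>
      ((⋃ v ∈ Z (n+1), dyadicCubeR d (n+1) v) ×ˢ (⋃ v ∈ W (n+1), dyadicCubeR d (n+1) v)) ∩
        {p | Metric.infDist (p.1 + p.2) Λ ≤ 4 / 2^(n+1)} with hSdef
    have hone : ∀ n : ℕ, 1 ≤ n + 1 := fun n => Nat.le_add_left 1 n
    have hcl : ∀ n, IsClosed {p : Rv d × Rv d | Metric.infDist (p.1 + p.2) Λ ≤ 4 / 2^(n+1)} := fun n =>
      isClosed_le ((Metric.continuous_infDist_pt Λ).comp (continuous_fst.add continuous_snd))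
        continuous_const
    have hScomp : ∀ n, IsCompact (S n) := fun n =>
      (((hKZcomp (n+1) (hone n)).prod (hKWcomp (n+1) (hone n))).inter_right (hcl n))
    have hSclosed : ∀ n, IsClosed (S n) := fun n =>
      (IsClosed.prod (hKZcomp (n+1) (hone n)).isClosed (hKWcomp (n+1) (hone n)).isClosed).inter (hcl n)
    have hSne : ∀ n, (S n).Nonempty := by
      intro n
      obtain ⟨a, ha, b, hb, hd'⟩ := key (n+1) (hone n)
      exact ⟨(a,b), ⟨⟨ha, hb⟩, hd'⟩⟩
    have hSmono : ∀ n, S (n+1) ⊆ S n := by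
      intro n p hp
      obtain ⟨⟨h1, h2⟩, h3⟩ := hp
      refine ⟨⟨hKZnest (n+1) (hone n) h1, hKWnest (n+1) (hone n) h2⟩, ?_⟩
      have h3' : Metric.infDist (p.1 + p.2) Λ ≤ 4 / 2^(n+1+1) := h3
      have hle : (4:ℝ)/2^(n+1+1) ≤ 4/2^(n+1) := by
        apply div_le_div_of_nonneg_left (by norm_num) (by positivity)
        apply pow_le_pow_right₀ (by norm_num)
        omega
      exact le_trans h3' hle
    obtain ⟨⟨a, b⟩, hab⟩ :=
      IsCompact.nonempty_iInter_of_sequence_nonempty_isCompact_isClosed S hSmono hSne (hScomp 0) hSclosed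
    simp only [Set.mem_iInter] at hab
    have haD : a ∈ ⋂ k ∈ {k : ℕ | 1 ≤ k}, ⋃ v ∈ Z k, dyadicCubeR d k v := by
      refine Set.mem_iInter₂.mpr fun k hk => ?_
      have h := (hab (k-1)).1.1
      rwa [Nat.sub_add_cancel hk] at h
    have hbD : b ∈ ⋂ k ∈ {k : ℕ | 1 ≤ k}, ⋃ v ∈ W k, dyadicCubeR d k v := by
      refine Set.mem_iInter₂.mpr fun k hk => ?_
      have h := (hab (k-1)).1.2
      rwa [Nat.sub_add_cancel hk] at h
    have h0 : Metric.infDist (a + b) Λ ≤ 0 := by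
      have hten : Filter.Tendsto (fun n : ℕ => (4:ℝ) / 2^(n+1)) Filter.atTop (nhds 0) := by
        have h := tendsto_pow_atTop_nhds_zero_of_lt_one (by norm_num : (0:ℝ) ≤ 1/2)
          (by norm_num : (1/2:ℝ) < 1)
        have h3 := h.const_mul (2:ℝ)
        rw [mul_zero] at h3
        refine h3.congr fun n => ?_
        rw [div_pow, one_pow, pow_succ]
        field_simp
        ring
      exact ge_of_tendsto hten (Filter.Eventually.of_forall fun n => (hab n).2)
    have hmem : a + b ∈ Λ := by
      rw [hΛc.mem_iff_infDist_zero hΛne]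
      exact le_antisymm h0 Metric.infDist_nonneg
    exact ⟨a + b, Set.add_mem_add haD hbD, hmem⟩
end
end
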